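/- arXiv:2008.09051 — 2 statements merged into one kernel-verified Lean document; each statement's English description precedes it below -/
import Mathlib

section
/- Let n, k be integers with n > 2k and k ≥ 1. If G is any simple graph whose Kronecker cover K_2 × G is isomorphic to the bipartite Kneser graph H(n,k), then G is isomorphic to G_i(n,k) for some integer i with 0 ≤ i < k. -/
/-- The involution on `ℕ` swapping `2j ↔ 2j+1` for `j < i`. -/
def sigmaNat (i : ℕ) (x : ℕ) : ℕ :=
  if x < 2 * i then (if x % 2 = 0 then x + 1 else x - 1) else x

lemma sigmaNat_invol (i : ℕ) : Function.Involutive (sigmaNat i) := by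
  intro x; unfold sigmaNat; split_ifs <;> omega

/-- `sigmaNat` restricted to `Fin n` (the identity in the out-of-range degenerate case,
which never occurs when `2 * i ≤ n`). -/
def sigmaFinFun (n i : ℕ) (x : Fin n) : Fin n :=
  if h : sigmaNat i x.val < n then ⟨sigmaNat i x.val, h⟩ else x

lemma sigmaFinFun_invol (n i : ℕ) : Function.Involutive (sigmaFinFun n i) := by
  intro x
  unfold sigmaFinFun
  by_cases h : sigmaNat i x.val < n
  · rw [dif_pos h]
    have h2 : sigmaNat i ((⟨sigmaNat i x.val, h⟩ : Fin n) : ℕ) < n := by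
      show sigmaNat i (sigmaNat i x.val) < n
      rw [sigmaNat_invol]; exact x.isLt
    rw [dif_pos h2]
    ext
    exact sigmaNat_invol i x.val
  · rw [dif_neg h, dif_neg h]

/-- The permutation `σ_i = (1 2)(3 4)⋯(2i-1 2i)` of `[n]`, in `0`-indexed form on `Fin n`:
it swaps `2j ↔ 2j+1` for `j < i` and fixes everything else (assuming `2 * i ≤ n`). -/
def sigmaPerm (n i : ℕ) : Equiv.Perm (Fin n) :=
  Function.Involutive.toPerm _ (sigmaFinFun_invol n i)

/-- The Kneser graph `K(n,k)`: vertices are the `k`-subsets of `[n]`, two subsets being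
adjacent iff they are disjoint. -/
def kneserGraph (n k : ℕ) : SimpleGraph {s : Finset (Fin n) // s.card = k} where
  Adj v w := v ≠ w ∧ Disjoint v.1 w.1
  symm := ⟨fun _ _ h => ⟨h.1.symm, h.2.symm⟩⟩
  loopless := ⟨fun _ h => h.1 rfl⟩

/-- The graph `G_i(n,k)`: vertices are the `k`-subsets of `[n]`, with `v` adjacent to `w`
iff `v ∩ σ_i(w) = ∅`. -/
def GGraph (n k i : ℕ) : SimpleGraph {s : Finset (Fin n) // s.card = k} where
  Adj v w := v ≠ w ∧ Disjoint v.1 (w.1.image (sigmaPerm n i))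
  symm := by
    constructor
    rintro v w ⟨h1, h2⟩
    refine ⟨h1.symm, ?_⟩
    rw [Finset.disjoint_left] at h2 ⊢
    intro a haw hav
    rcases Finset.mem_image.mp hav with ⟨b, hbv, hba⟩
    refine h2 hbv (Finset.mem_image.mpr ⟨a, haw, ?_⟩)
    rw [← hba]
    exact (sigmaFinFun_invol n i) b
  loopless := ⟨fun _ h => h.1 rfl⟩

/-- The Kronecker cover `K₂ × G`: vertex set `{0,1} × V(G)`, with `(a,v)` adjacent to
`(b,w)` iff `a ≠ b` and `v` is adjacent to `w` in `G`. -/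
def kroneckerCover {V : Type*} (G : SimpleGraph V) : SimpleGraph (Fin 2 × V) where
  Adj x y := x.1 ≠ y.1 ∧ G.Adj x.2 y.2
  symm := ⟨fun _ _ h => ⟨h.1.symm, h.2.symm⟩⟩
  loopless := ⟨fun _ h => h.1 rfl⟩

open Finset

variable {n : ℕ}

/-- strict monotonicity of choose in the top argument -/
lemma choose_strict_mono {k m₁ m₂ : ℕ} (hk1 : 1 ≤ k) (hk : k ≤ m₁) (h : m₁ < m₂) :
    m₁.choose k < m₂.choose k := by
  rcases k with _ | k'
  · omega
  calc m₁.choose (k'+1) < (m₁+1).choose (k'+1) := by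
        have hrec : (m₁+1).choose (k'+1) = m₁.choose k' + m₁.choose (k'+1) :=
          Nat.choose_succ_succ m₁ k'
        have : 0 < m₁.choose k' := Nat.choose_pos (by omega)
        omega
    _ ≤ m₂.choose (k'+1) := Nat.choose_le_choose _ (by omega)

/-- find a k-subset of A containing a given element -/
lemma exists_ksubset_mem {α : Type*} [DecidableEq α] {A : Finset α} {x : α} {k : ℕ}
    (hx : x ∈ A) (hA : k ≤ A.card) (hk : 1 ≤ k) :
    ∃ S, S ⊆ A ∧ S.card = k ∧ x ∈ S := by
  obtain ⟨B, hB, hBcard⟩ := Finset.exists_subset_card_eq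
    (show k - 1 ≤ (A.erase x).card by rw [Finset.card_erase_of_mem hx]; omega)
  refine ⟨insert x B, ?_, ?_, Finset.mem_insert_self _ _⟩
  · intro y hy
    rcases Finset.mem_insert.mp hy with rfl | hyB
    · exact hx
    · exact Finset.erase_subset _ _ (hB hyB)
  · rw [Finset.card_insert_of_notMem (fun hxB => (Finset.notMem_erase x A) (hB hxB))]
    omega

/-- two sets with the same disjointness pattern against k-sets are equal -/
lemma eq_of_same_disjoint {α : Type*} [DecidableEq α] [Fintype α] {k : ℕ} {S T : Finset α}
    (hk : 1 ≤ k) (hspace : k ≤ (Finset.univ \ S).card) (hspace' : k ≤ (Finset.univ \ T).card)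
    (h : ∀ Z : Finset α, Z.card = k → (Disjoint Z S ↔ Disjoint Z T)) : S = T := by
  have key : ∀ (S T : Finset α), k ≤ (Finset.univ \ S).card →
      (∀ Z : Finset α, Z.card = k → (Disjoint Z S → Disjoint Z T)) → T ⊆ S := by
    intro S T hsp hZ x hxT
    by_contra hxS
    have hx : x ∈ Finset.univ \ S := by simp [hxS]
    obtain ⟨Z, hZsub, hZcard, hxZ⟩ := exists_ksubset_mem hx hsp hk
    have hdisj : Disjoint Z S := by
      rw [Finset.disjoint_left]; intro a haZ haS
      have := hZsub haZ; simp at this; exact this haS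
    have := (hZ Z hZcard hdisj)
    exact Finset.disjoint_left.mp this hxZ hxT
  exact le_antisymm (key T S hspace' (fun Z hZc => (h Z hZc).mpr)) (key S T hspace (fun Z hZc => (h Z hZc).mp))

/-- the clique lemma: a large family of j-sets pairwise intersecting in (j-1)-sets has a
common (j-1)-set -/
lemma clique_common {α : Type*} [DecidableEq α] {j : ℕ} (hj : 2 ≤ j) (F : Finset (Finset α))
    (hc : ∀ S ∈ F, S.card = j) (hp : ∀ S ∈ F, ∀ T ∈ F, S ≠ T → (S ∩ T).card = j - 1)
    (hbig : j + 2 ≤ F.card) : ∃ R : Finset α, R.card = j - 1 ∧ ∀ S ∈ F, R ⊆ S := by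
  obtain ⟨S₁, hS₁, S₂, hS₂, hne⟩ := Finset.one_lt_card.mp (by omega : 1 < F.card)
  set R := S₁ ∩ S₂ with hRdef
  have hRcard : R.card = j - 1 := hp S₁ hS₁ S₂ hS₂ hne
  by_cases hall : ∀ S ∈ F, R ⊆ S
  · exact ⟨R, hRcard, hall⟩
  push_neg at hall
  obtain ⟨S₃, hS₃, hRS₃⟩ := hall
  exfalso
  set C := S₁ ∪ S₂ with hCdef
  have hCcard : C.card = j + 1 := by
    have := Finset.card_union_add_card_inter S₁ S₂
    rw [hc S₁ hS₁, hc S₂ hS₂, ← hRdef, ← hCdef, hRcard] at this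
    omega
  -- any member not containing R is inside C
  have key : ∀ S ∈ F, ¬ R ⊆ S → S ⊆ C := by
    intro S hS hRS
    have hne1 : S ≠ S₁ := by rintro rfl; exact hRS Finset.inter_subset_left
    have hne2 : S ≠ S₂ := by rintro rfl; exact hRS Finset.inter_subset_right
    have h1 : (S ∩ S₁).card = j - 1 := hp S hS S₁ hS₁ hne1
    have h2 : (S ∩ S₂).card = j - 1 := hp S hS S₂ hS₂ hne2
    have hne12 : S ∩ S₁ ≠ S ∩ S₂ := by
      intro heq
      apply hRS
      have hsub : S ∩ S₁ ⊆ R := by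
        rw [hRdef]; intro a ha
        have h1' := ha
        rw [heq] at h1'
        simp only [Finset.mem_inter] at ha h1' ⊢
        exact ⟨ha.2, h1'.2⟩
      have : S ∩ S₁ = R := Finset.eq_of_subset_of_card_le hsub (by omega)
      rw [← this]; exact Finset.inter_subset_left
    have hunion : j ≤ ((S ∩ S₁) ∪ (S ∩ S₂)).card := by
      by_contra hlt
      push_neg at hlt
      have hsub1 : S ∩ S₁ ⊆ (S ∩ S₁) ∪ (S ∩ S₂) := Finset.subset_union_left
      have hsub2 : S ∩ S₂ ⊆ (S ∩ S₁) ∪ (S ∩ S₂) := Finset.subset_union_right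
      have e1 : S ∩ S₁ = (S ∩ S₁) ∪ (S ∩ S₂) := Finset.eq_of_subset_of_card_le hsub1 (by omega)
      have e2 : S ∩ S₂ = (S ∩ S₁) ∪ (S ∩ S₂) := Finset.eq_of_subset_of_card_le hsub2 (by omega)
      exact hne12 (e1.trans e2.symm)
    have hsubSC : (S ∩ S₁) ∪ (S ∩ S₂) ⊆ S ∩ C := by
      rw [hCdef]
      intro a ha
      simp only [Finset.mem_union, Finset.mem_inter] at ha ⊢
      tauto
    have : j ≤ (S ∩ C).card := le_trans hunion (Finset.card_le_card hsubSC)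
    have : S ∩ C = S := Finset.eq_of_subset_of_card_le Finset.inter_subset_left
      (by rw [hc S hS]; omega)
    rw [← this]; exact Finset.inter_subset_right
  have hS₃C : S₃ ⊆ C := key S₃ hS₃ hRS₃
  -- every member is inside C
  have allC : ∀ S ∈ F, S ⊆ C := by
    intro S hS
    by_cases hRS : R ⊆ S
    · rcases eq_or_ne S S₁ with rfl | hne1
      · exact Finset.subset_union_left
      rcases eq_or_ne S S₂ with rfl | hne2
      · exact Finset.subset_union_right
      -- S = R ∪ {x}, show x ∈ S₃ ⊆ C
      have hScard : S.card = j := hc S hS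
      have hSR : (S \ R).card = 1 := by
        rw [Finset.card_sdiff_of_subset hRS]; omega
      obtain ⟨x, hx⟩ := Finset.card_eq_one.mp hSR
      have hSeq : S = insert x R := by
        have h1 : S = (S \ R) ∪ R := by
          rw [Finset.sdiff_union_self_eq_union]
          exact (Finset.union_eq_left.mpr hRS).symm
        rw [h1, hx]; exact (Finset.insert_eq x R).symm
      have hne3 : S ≠ S₃ := by rintro rfl; exact hRS₃ hRS
      have h3 : (S ∩ S₃).card = j - 1 := hp S hS S₃ hS₃ hne3
      have hRS₃card : (R ∩ S₃).card ≤ j - 2 := by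
        have hne' : R ∩ S₃ ≠ R := by
          intro hh
          exact hRS₃ (by rw [← hh]; exact Finset.inter_subset_right)
        have hsub : R ∩ S₃ ⊂ R :=
          Finset.ssubset_iff_subset_ne.mpr ⟨Finset.inter_subset_left, hne'⟩
        have := Finset.card_lt_card hsub
        omega
      have hxS₃ : x ∈ S₃ := by
        by_contra hxS₃
        have : S ∩ S₃ ⊆ R ∩ S₃ := by
          intro a ha
          rw [hSeq] at ha
          simp only [Finset.mem_inter, Finset.mem_insert] at ha ⊢
          rcases ha.1 with rfl | haR
          · exact absurd ha.2 hxS₃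
          · exact ⟨haR, ha.2⟩
        have := Finset.card_le_card this
        omega
      rw [hSeq]
      intro a ha
      rcases Finset.mem_insert.mp ha with rfl | haR
      · exact hS₃C hxS₃
      · exact Finset.subset_union_left (Finset.inter_subset_left (hRdef ▸ haR))
    · exact key S hS hRS
  -- contradiction with size
  have hFsub : F ⊆ C.powersetCard j := by
    intro S hS
    rw [Finset.mem_powersetCard]
    exact ⟨allC S hS, hc S hS⟩
  have := Finset.card_le_card hFsub
  rw [Finset.card_powersetCard, hCcard] at this
  have h1 : (j+1).choose j = j+1 := by
    rw [← Nat.choose_symm (show j ≤ j+1 by omega)]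
    norm_num
  omega
/-- goodness of a level-j map: preserves cardinality, injective on the level, and maps
Johnson-adjacent pairs to Johnson-adjacent pairs -/
def GoodMap (n j : ℕ) (u : Finset (Fin n) → Finset (Fin n)) : Prop :=
  (∀ S : Finset (Fin n), S.card = j → (u S).card = j) ∧
  (∀ S T : Finset (Fin n), S.card = j → T.card = j → u S = u T → S = T) ∧
  (∀ S T : Finset (Fin n), S.card = j → T.card = j → (S ∩ T).card = j - 1 →
    ((u S) ∩ (u T)).card = j - 1)

/-- number of (j+1)-supersets of a j-set in Fin n -/
lemma card_star {n j : ℕ} (R : Finset (Fin n)) (hR : R.card = j) :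
    ((Finset.univ.powersetCard (j+1)).filter (fun S => R ⊆ S)).card = n - j := by
  have key : (Finset.univ \ R).card =
      ((Finset.univ.powersetCard (j+1)).filter (fun S => R ⊆ S)).card := by
    apply Finset.card_bij (i := fun x _ => insert x R)
    · intro x hx
      rw [Finset.mem_sdiff] at hx
      rw [Finset.mem_filter, Finset.mem_powersetCard]
      exact ⟨⟨Finset.subset_univ _, by rw [Finset.card_insert_of_notMem hx.2, hR]⟩,
        Finset.subset_insert _ _⟩
    · intro x hx y hy hEq
      rw [Finset.mem_sdiff] at hx hy
      have : x ∈ insert y R := hEq ▸ Finset.mem_insert_self x R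
      rcases Finset.mem_insert.mp this with h | h
      · exact h
      · exact absurd h hx.2
    · intro S hS
      rw [Finset.mem_filter, Finset.mem_powersetCard] at hS
      obtain ⟨⟨_, hScard⟩, hRS⟩ := hS
      have hcard1 : (S \ R).card = 1 := by rw [Finset.card_sdiff_of_subset hRS]; omega
      obtain ⟨x, hx⟩ := Finset.card_eq_one.mp hcard1
      have hxmem : x ∈ S \ R := hx ▸ Finset.mem_singleton_self x
      rw [Finset.mem_sdiff] at hxmem
      refine ⟨x, Finset.mem_sdiff.mpr ⟨Finset.mem_univ x, hxmem.2⟩, ?_⟩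
      apply Finset.Subset.antisymm
      · intro a ha
        rcases Finset.mem_insert.mp ha with rfl | h
        · exact hxmem.1
        · exact hRS h
      · intro a ha
        by_cases haR : a ∈ R
        · exact Finset.mem_insert_of_mem haR
        · have : a ∈ S \ R := Finset.mem_sdiff.mpr ⟨ha, haR⟩
          rw [hx, Finset.mem_singleton] at this
          exact this ▸ Finset.mem_insert_self x R
  rw [← key, Finset.card_sdiff_of_subset (Finset.subset_univ R), Finset.card_univ, Fintype.card_fin, hR]

/-- injective level maps are surjective on the level -/
lemma level_surj {n j : ℕ} {u : Finset (Fin n) → Finset (Fin n)}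
    (h1 : ∀ S : Finset (Fin n), S.card = j → (u S).card = j)
    (h2 : ∀ S T : Finset (Fin n), S.card = j → T.card = j → u S = u T → S = T) :
    ∀ T : Finset (Fin n), T.card = j → ∃ S, S.card = j ∧ u S = T := by
  intro T hT
  set L := (Finset.univ : Finset (Fin n)).powersetCard j with hL
  have hmemL : ∀ S, S ∈ L ↔ S.card = j := by
    intro S; rw [hL, Finset.mem_powersetCard]
    exact ⟨fun h => h.2, fun h => ⟨Finset.subset_univ _, h⟩⟩
  have himgsub : L.image u ⊆ L := by
    intro T' hT'
    obtain ⟨S, hS, rfl⟩ := Finset.mem_image.mp hT'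
    exact (hmemL _).mpr (h1 S ((hmemL S).mp hS))
  have hcard : L.card ≤ (L.image u).card := by
    rw [Finset.card_image_of_injOn (fun S hS T hT hEq => h2 S T ((hmemL S).mp hS) ((hmemL T).mp hT) hEq)]
  have heq : L.image u = L := Finset.eq_of_subset_of_card_le himgsub hcard
  have : T ∈ L.image u := by rw [heq]; exact (hmemL T).mpr hT
  obtain ⟨S, hS, hSu⟩ := Finset.mem_image.mp this
  exact ⟨S, (hmemL S).mp hS, hSu⟩

lemma tower_step {n j : ℕ} (hj : 1 ≤ j) (hn : 2 * (j+1) < n)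
    {u : Finset (Fin n) → Finset (Fin n)} (hu : GoodMap n (j+1) u) :
    ∃ u', GoodMap n j u' ∧
      ∀ R S : Finset (Fin n), R.card = j → S.card = j+1 → (R ⊆ S ↔ u' R ⊆ u S) := by
  obtain ⟨hc, hinj, hJ⟩ := hu
  have ex : ∀ R : Finset (Fin n), R.card = j →
      ∃ R', R'.card = j ∧ ∀ S, S.card = j+1 → R ⊆ S → R' ⊆ u S := by
    intro R hR
    set st := (Finset.univ.powersetCard (j+1)).filter (fun S => R ⊆ S) with hst
    have hstcard : st.card = n - j := card_star R hR
    have hmemst : ∀ S, S ∈ st ↔ (S.card = j + 1 ∧ R ⊆ S) := by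
      intro S
      rw [hst, Finset.mem_filter, Finset.mem_powersetCard]
      exact ⟨fun h => ⟨h.1.2, h.2⟩, fun h => ⟨⟨Finset.subset_univ _, h.1⟩, h.2⟩⟩
    set F := st.image u with hF
    have hFcard : F.card = n - j := by
      rw [hF, Finset.card_image_of_injOn, hstcard]
      intro S hS T hT hEq
      exact hinj S T ((hmemst S).mp hS).1 ((hmemst T).mp hT).1 hEq
    have hFc : ∀ T ∈ F, T.card = j + 1 := by
      intro T hT
      obtain ⟨S, hS, rfl⟩ := Finset.mem_image.mp hT
      exact hc S ((hmemst S).mp hS).1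
    have hFp : ∀ T ∈ F, ∀ T' ∈ F, T ≠ T' → (T ∩ T').card = (j+1) - 1 := by
      intro T hT T' hT' hne
      obtain ⟨S, hS, rfl⟩ := Finset.mem_image.mp hT
      obtain ⟨S', hS', rfl⟩ := Finset.mem_image.mp hT'
      obtain ⟨hScard, hRS⟩ := (hmemst S).mp hS
      obtain ⟨hS'card, hRS'⟩ := (hmemst S').mp hS'
      have hSne : S ≠ S' := fun h => hne (h ▸ rfl)
      have hintcard : (S ∩ S').card = j := by
        have hle : (S ∩ S').card ≤ j := by
          have hne' : S ∩ S' ≠ S := by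
            intro hh
            apply hSne
            have hsub : S ⊆ S' := by
              intro a ha
              rw [← hh] at ha
              exact (Finset.mem_inter.mp ha).2
            exact Finset.eq_of_subset_of_card_le hsub (by omega)
          have := Finset.card_lt_card
            (Finset.ssubset_iff_subset_ne.mpr ⟨Finset.inter_subset_left, hne'⟩)
          omega
        have hge : j ≤ (S ∩ S').card := by
          have : R ⊆ S ∩ S' := fun a ha => Finset.mem_inter.mpr ⟨hRS ha, hRS' ha⟩
          have := Finset.card_le_card this
          omega
        omega
      have := hJ S S' hScard hS'card (by rw [hintcard]; omega)
      omega
    have hcommon := clique_common (show 2 ≤ j+1 by omega) F hFc hFp (by omega)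
    obtain ⟨R', hR'card, hR'sub⟩ := hcommon
    refine ⟨R', by omega, ?_⟩
    intro S hScard hRS
    exact hR'sub (u S) (Finset.mem_image_of_mem u ((hmemst S).mpr ⟨hScard, hRS⟩))
  choose u'f hu'c hu'sub using ex
  classical
  set u' : Finset (Fin n) → Finset (Fin n) :=
    fun R => if h : R.card = j then u'f R h else ∅ with hu'
  have hu'card : ∀ R : Finset (Fin n), R.card = j → (u' R).card = j := by
    intro R hR; rw [hu']; simp only [dif_pos hR]; exact hu'c R hR
  have compat_fwd : ∀ R S : Finset (Fin n), R.card = j → S.card = j+1 → R ⊆ S → u' R ⊆ u S := by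
    intro R S hR hS hRS
    rw [hu']; simp only [dif_pos hR]
    exact hu'sub R hR S hS hRS
  have compat : ∀ R S : Finset (Fin n), R.card = j → S.card = j+1 → (R ⊆ S ↔ u' R ⊆ u S) := by
    intro R S hR hS
    refine ⟨compat_fwd R S hR hS, ?_⟩
    intro hsub
    set st := (Finset.univ.powersetCard (j+1)).filter (fun T => R ⊆ T) with hst
    set st' := (Finset.univ.powersetCard (j+1)).filter (fun T => u' R ⊆ T) with hst'
    have hmemst : ∀ T, T ∈ st ↔ (T.card = j + 1 ∧ R ⊆ T) := by
      intro T
      rw [hst, Finset.mem_filter, Finset.mem_powersetCard]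
      exact ⟨fun h => ⟨h.1.2, h.2⟩, fun h => ⟨⟨Finset.subset_univ _, h.1⟩, h.2⟩⟩
    have hmemst' : ∀ T, T ∈ st' ↔ (T.card = j + 1 ∧ u' R ⊆ T) := by
      intro T
      rw [hst', Finset.mem_filter, Finset.mem_powersetCard]
      exact ⟨fun h => ⟨h.1.2, h.2⟩, fun h => ⟨⟨Finset.subset_univ _, h.1⟩, h.2⟩⟩
    have himgsub : st.image u ⊆ st' := by
      intro T hT
      obtain ⟨S', hS', rfl⟩ := Finset.mem_image.mp hT
      obtain ⟨hS'card, hRS'⟩ := (hmemst S').mp hS'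
      exact (hmemst' _).mpr ⟨hc S' hS'card, compat_fwd R S' hR hS'card hRS'⟩
    have hcardimg : (st.image u).card = n - j := by
      rw [Finset.card_image_of_injOn, card_star R hR]
      intro S1 hS1 T1 hT1 hEq
      exact hinj S1 T1 ((hmemst S1).mp hS1).1 ((hmemst T1).mp hT1).1 hEq
    have hcardst' : st'.card = n - j := card_star (u' R) (hu'card R hR)
    have heq : st.image u = st' :=
      Finset.eq_of_subset_of_card_le himgsub (by omega)
    have : u S ∈ st' := (hmemst' _).mpr ⟨hc S hS, hsub⟩
    rw [← heq] at this
    obtain ⟨S', hS', hS'u⟩ := Finset.mem_image.mp this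
    obtain ⟨hS'card, hRS'⟩ := (hmemst S').mp hS'
    exact (hinj S' S hS'card hS hS'u) ▸ hRS'
  have hG2 : ∀ R T : Finset (Fin n), R.card = j → T.card = j → u' R = u' T → R = T := by
    have semi : ∀ R T : Finset (Fin n), R.card = j → T.card = j → u' R = u' T → T ⊆ R := by
      intro R T hR hT hEq x hxT
      by_contra hxR
      have hbig : 0 < (Finset.univ \ insert x R).card := by
        rw [Finset.card_sdiff_of_subset (Finset.subset_univ _), Finset.card_univ, Fintype.card_fin,
          Finset.card_insert_of_notMem hxR, hR]
        omega
      obtain ⟨y, hy⟩ := Finset.card_pos.mp hbig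
      rw [Finset.mem_sdiff, Finset.mem_insert] at hy
      push_neg at hy
      have hyR : y ∉ R := hy.2.2
      have hScard : (insert y R).card = j + 1 := by
        rw [Finset.card_insert_of_notMem hyR, hR]
      have h1 : u' R ⊆ u (insert y R) :=
        compat_fwd R (insert y R) hR hScard (Finset.subset_insert _ _)
      have h2 : T ⊆ insert y R :=
        (compat T (insert y R) hT hScard).mpr (hEq ▸ h1)
      have := h2 hxT
      rw [Finset.mem_insert] at this
      rcases this with rfl | h
      · exact hy.2.1 rfl
      · exact hxR h
    intro R T hR hT hEq
    exact Finset.Subset.antisymm (semi T R hT hR hEq.symm) (semi R T hR hT hEq)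
  refine ⟨u', ⟨hu'card, hG2, ?_⟩, compat⟩
  intro R T hR hT hint
  have hRT : R ≠ T := by
    intro rfl_eq
    subst rfl_eq
    rw [Finset.inter_self] at hint
    omega
  have hScard : (R ∪ T).card = j + 1 := by
    have := Finset.card_union_add_card_inter R T
    rw [hR, hT, hint] at this
    omega
  have h1 : u' R ⊆ u (R ∪ T) :=
    compat_fwd R (R ∪ T) hR hScard Finset.subset_union_left
  have h2 : u' T ⊆ u (R ∪ T) :=
    compat_fwd T (R ∪ T) hT hScard Finset.subset_union_right
  have hne' : u' R ≠ u' T := fun h => hRT (hG2 R T hR hT h)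
  have huc : (u (R ∪ T)).card = j + 1 := hc _ hScard
  have hunle : (u' R ∪ u' T).card ≤ j + 1 := by
    have : u' R ∪ u' T ⊆ u (R ∪ T) := Finset.union_subset h1 h2
    have := Finset.card_le_card this
    omega
  have hintle : (u' R ∩ u' T).card ≤ j - 1 := by
    by_contra hcon
    push_neg at hcon
    have hsub : u' R ∩ u' T ⊆ u' R := Finset.inter_subset_left
    have hcardR : (u' R).card = j := hu'card R hR
    have : u' R ∩ u' T = u' R := Finset.eq_of_subset_of_card_le hsub (by omega)
    have hsub2 : u' R ⊆ u' T := by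
      intro a ha
      rw [← this] at ha
      exact (Finset.mem_inter.mp ha).2
    exact hne' (Finset.eq_of_subset_of_card_le hsub2 (by rw [hu'card T hT, hu'card R hR]))
  have := Finset.card_union_add_card_inter (u' R) (u' T)
  rw [hu'card R hR, hu'card T hT] at this
  omega
lemma tower_down {n : ℕ} : ∀ (j : ℕ) (u : Finset (Fin n) → Finset (Fin n)), 1 ≤ j → 2*j < n →
    GoodMap n j u →
    ∃ π : Equiv.Perm (Fin n), ∀ S : Finset (Fin n), S.card = j → u S = S.image π := by
  intro j
  induction j with
  | zero => intro u h; omega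
  | succ j ih =>
    intro u hj hn hu
    rcases Nat.eq_zero_or_pos j with rfl | hj1
    · -- base case: level 1
      have hs : ∀ x : Fin n, ∃ y, u {x} = {y} :=
        fun x => Finset.card_eq_one.mp (hu.1 {x} (Finset.card_singleton x))
      choose p hp using hs
      have hinj : Function.Injective p := by
        intro x y hEq
        have := hu.2.1 {x} {y} (Finset.card_singleton x) (Finset.card_singleton y)
          (by rw [hp x, hp y, hEq])
        exact Finset.singleton_injective this
      have hbij : Function.Bijective p := Finite.injective_iff_bijective.mp hinj
      refine ⟨Equiv.ofBijective p hbij, ?_⟩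
      intro S hS
      obtain ⟨x, rfl⟩ := Finset.card_eq_one.mp hS
      rw [Finset.image_singleton, hp x]
      rfl
    · obtain ⟨u', hu', compat⟩ := tower_step hj1 hn hu
      obtain ⟨π, hπ⟩ := ih u' hj1 (by omega) hu'
      refine ⟨π, ?_⟩
      intro S hS
      have hsub : S.image π ⊆ u S := by
        intro y hy
        obtain ⟨x, hxS, rfl⟩ := Finset.mem_image.mp hy
        obtain ⟨t, htS, htx⟩ := Finset.exists_mem_ne (by omega : 1 < S.card) x
        set R := S.erase t with hR
        have hRcard : R.card = j := by rw [hR, Finset.card_erase_of_mem htS, hS]; omega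
        have hxR : x ∈ R := Finset.mem_erase.mpr ⟨fun h => htx h.symm, hxS⟩
        have h1 : π x ∈ u' R := by
          rw [hπ R hRcard]
          exact Finset.mem_image_of_mem π hxR
        exact (compat R S hRcard hS).mp (Finset.erase_subset t S) h1
      exact (Finset.eq_of_subset_of_card_le hsub
        (by rw [Finset.card_image_of_injective S π.injective, hS, hu.1 S hS])).symm

/-- classification of disjointness-preserving pairs of level-k bijections -/
theorem pair_perm {n k : ℕ} (hk : 1 ≤ k) (hn : 2*k < n)
    (a b : Finset (Fin n) → Finset (Fin n))
    (hac : ∀ S : Finset (Fin n), S.card = k → (a S).card = k)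
    (hbc : ∀ S : Finset (Fin n), S.card = k → (b S).card = k)
    (hbsurj : ∀ T : Finset (Fin n), T.card = k → ∃ S, S.card = k ∧ b S = T)
    (hD : ∀ S T : Finset (Fin n), S.card = k → T.card = k →
      (Disjoint S T ↔ Disjoint (a S) (b T))) :
    ∃ π : Equiv.Perm (Fin n), (∀ S : Finset (Fin n), S.card = k → a S = S.image π) ∧
      (∀ S : Finset (Fin n), S.card = k → b S = S.image π) := by
  have hspace : ∀ S : Finset (Fin n), S.card = k → k ≤ (Finset.univ \ S).card := by
    intro S hS
    rw [Finset.card_sdiff_of_subset (Finset.subset_univ S), Finset.card_univ, Fintype.card_fin, hS]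
    omega
  -- a is injective on level k
  have hainj : ∀ S T : Finset (Fin n), S.card = k → T.card = k → a S = a T → S = T := by
    intro S T hS hT hEq
    apply eq_of_same_disjoint hk (hspace S hS) (hspace T hT)
    intro Z hZ
    constructor
    · intro hd
      have := (hD S Z hS hZ).mp hd.symm
      rw [hEq] at this
      exact ((hD T Z hT hZ).mpr this).symm
    · intro hd
      have := (hD T Z hT hZ).mp hd.symm
      rw [← hEq] at this
      exact ((hD S Z hS hZ).mpr this).symm
  -- b is injective on level k
  have hbinj : ∀ S T : Finset (Fin n), S.card = k → T.card = k → b S = b T → S = T := by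
    intro S T hS hT hEq
    apply eq_of_same_disjoint hk (hspace S hS) (hspace T hT)
    intro Z hZ
    constructor
    · intro hd
      have := (hD Z S hZ hS).mp hd
      rw [hEq] at this
      exact (hD Z T hZ hT).mpr this
    · intro hd
      have := (hD Z T hZ hT).mp hd
      rw [← hEq] at this
      exact (hD Z S hZ hS).mpr this
  -- counting common neighbors: a preserves Johnson adjacency
  have hGood : GoodMap n k a := by
    refine ⟨hac, hainj, ?_⟩
    intro S T hS hT hint
    have hSneT : S ≠ T := by
      intro rfl_eq; subst rfl_eq; rw [Finset.inter_self] at hint; omega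
    have haneT : a S ≠ a T := fun h => hSneT (hainj S T hS hT h)
    have hucard : (S ∪ T).card = k + 1 := by
      have := Finset.card_union_add_card_inter S T
      rw [hS, hT, hint] at this; omega
    -- bijection between common-neighbor sets
    have hkey : ((Finset.univ \ (S ∪ T)).powersetCard k).card =
        ((Finset.univ \ (a S ∪ a T)).powersetCard k).card := by
      apply Finset.card_bij (i := fun U _ => b U)
      · intro U hU
        rw [Finset.mem_powersetCard] at hU ⊢
        obtain ⟨hUsub, hUcard⟩ := hU
        have hdS : Disjoint U S := by
          rw [Finset.disjoint_left]
          intro x hx hxS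
          have := hUsub hx
          rw [Finset.mem_sdiff, Finset.mem_union] at this
          exact this.2 (Or.inl hxS)
        have hdT : Disjoint U T := by
          rw [Finset.disjoint_left]
          intro x hx hxT
          have := hUsub hx
          rw [Finset.mem_sdiff, Finset.mem_union] at this
          exact this.2 (Or.inr hxT)
        have h1 : Disjoint (a S) (b U) := (hD S U hS hUcard).mp hdS.symm
        have h2 : Disjoint (a T) (b U) := (hD T U hT hUcard).mp hdT.symm
        constructor
        · intro x hx
          rw [Finset.mem_sdiff, Finset.mem_union]
          refine ⟨Finset.mem_univ x, ?_⟩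
          rintro (h | h)
          · exact Finset.disjoint_left.mp h1 h hx
          · exact Finset.disjoint_left.mp h2 h hx
        · exact hbc U hUcard
      · intro U hU U' hU' hEq
        rw [Finset.mem_powersetCard] at hU hU'
        exact hbinj U U' hU.2 hU'.2 hEq
      · intro V hV
        rw [Finset.mem_powersetCard] at hV
        obtain ⟨hVsub, hVcard⟩ := hV
        obtain ⟨U, hUcard, rfl⟩ := hbsurj V hVcard
        have h1 : Disjoint (a S) (b U) := by
          rw [Finset.disjoint_left]
          intro x hx hxU
          have := hVsub hxU
          rw [Finset.mem_sdiff, Finset.mem_union] at this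
          exact this.2 (Or.inl hx)
        have h2 : Disjoint (a T) (b U) := by
          rw [Finset.disjoint_left]
          intro x hx hxU
          have := hVsub hxU
          rw [Finset.mem_sdiff, Finset.mem_union] at this
          exact this.2 (Or.inr hx)
        have hdS : Disjoint U S := ((hD S U hS hUcard).mpr h1).symm
        have hdT : Disjoint U T := ((hD T U hT hUcard).mpr h2).symm
        refine ⟨U, ?_, rfl⟩
        rw [Finset.mem_powersetCard]
        refine ⟨?_, hUcard⟩
        intro x hx
        rw [Finset.mem_sdiff, Finset.mem_union]
        refine ⟨Finset.mem_univ x, ?_⟩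
        rintro (h | h)
        · exact Finset.disjoint_left.mp hdS hx h
        · exact Finset.disjoint_left.mp hdT hx h
    rw [Finset.card_powersetCard, Finset.card_powersetCard,
      Finset.card_sdiff_of_subset (Finset.subset_univ _), Finset.card_sdiff_of_subset (Finset.subset_univ _),
      Finset.card_univ, Fintype.card_fin, hucard] at hkey
    -- conclude (a S ∪ a T).card = k + 1
    have haucard : k + 1 ≤ (a S ∪ a T).card := by
      by_contra hcon
      push_neg at hcon
      have h1 : a S ⊆ a S ∪ a T := Finset.subset_union_left
      have h2 : a T ⊆ a S ∪ a T := Finset.subset_union_right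
      have hSk := hac S hS
      have hTk := hac T hT
      have e1 : a S = a S ∪ a T := Finset.eq_of_subset_of_card_le h1 (by omega)
      have e2 : a T = a S ∪ a T := Finset.eq_of_subset_of_card_le h2 (by omega)
      exact haneT (e1.trans e2.symm)
    have haucard2 : (a S ∪ a T).card = k + 1 := by
      by_contra hcon
      have hlt : k + 1 < (a S ∪ a T).card := by omega
      have hle : (a S ∪ a T).card ≤ 2 * k := by
        have := Finset.card_union_le (a S) (a T)
        rw [hac S hS, hac T hT] at this
        omega
      have hpos : 0 < (n - (k+1)).choose k := Nat.choose_pos (by omega)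
      rcases Nat.lt_or_ge (n - (a S ∪ a T).card) k with hsmall | hbig2
      · rw [Nat.choose_eq_zero_of_lt hsmall] at hkey
        omega
      · have := choose_strict_mono hk hbig2 (by omega : n - (a S ∪ a T).card < n - (k+1))
        omega
    have := Finset.card_union_add_card_inter (a S) (a T)
    rw [hac S hS, hac T hT, haucard2] at this
    omega
  obtain ⟨π, hπ⟩ := tower_down k a hk hn hGood
  refine ⟨π, hπ, ?_⟩
  -- b T = T.image π
  intro T hT
  have hsub : b T ⊆ T.image π := by
    intro y hy
    by_contra hyT
    have hpre : π.symm y ∉ T := by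
      intro hmem
      exact hyT (Finset.mem_image.mpr ⟨π.symm y, hmem, π.apply_symm_apply y⟩)
    have hmem : π.symm y ∈ Finset.univ \ T := Finset.mem_sdiff.mpr ⟨Finset.mem_univ _, hpre⟩
    obtain ⟨S, hSsub, hScard, hSy⟩ := exists_ksubset_mem hmem (hspace T hT) hk
    have hdisj : Disjoint S T := by
      rw [Finset.disjoint_left]
      intro x hx hxT
      have := hSsub hx
      rw [Finset.mem_sdiff] at this
      exact this.2 hxT
    have := (hD S T hScard hT).mp hdisj
    rw [hπ S hScard] at this
    have hyaS : y ∈ S.image π := Finset.mem_image.mpr ⟨π.symm y, hSy, π.apply_symm_apply y⟩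
    exact Finset.disjoint_left.mp this hyaS hy
  exact Finset.eq_of_subset_of_card_le hsub
    (by rw [Finset.card_image_of_injective T π.injective, hT, hbc T hT])
section PartA

open SimpleGraph

lemma kneser_adj_iff {n k : ℕ} (hk : 1 ≤ k) (v w : {s : Finset (Fin n) // s.card = k}) :
    (kneserGraph n k).Adj v w ↔ Disjoint v.1 w.1 := by
  constructor
  · exact fun h => h.2
  · intro hd
    refine ⟨?_, hd⟩
    intro rfl_eq
    subst rfl_eq
    rw [Finset.disjoint_self_iff_empty] at hd
    have := v.2
    rw [hd] at this
    simp at this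
    omega

lemma cover_walk_parity {V' : Type*} (G' : SimpleGraph V') {x y : Fin 2 × V'}
    (w : (kroneckerCover G').Walk x y) : x.1 = y.1 ↔ Even w.length := by
  induction w with
  | nil => simp
  | @cons u v z h p ih =>
    rw [SimpleGraph.Walk.length_cons, Nat.even_add_one, ← ih]
    have h2 : u.1.val ≠ v.1.val := fun hh => h.1 (Fin.ext hh)
    have hu := u.1.isLt
    have hv := v.1.isLt
    have hz := z.1.isLt
    simp only [Fin.ext_iff]
    omega

lemma kneser_reach_same {n k : ℕ} (hk : 1 ≤ k) (hn : 2 * k < n) (c : Fin 2)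
    (S T : {s : Finset (Fin n) // s.card = k}) :
    (kroneckerCover (kneserGraph n k)).Reachable (c, S) (c, T) := by
  have key : ∀ (d : ℕ) (S T : {s : Finset (Fin n) // s.card = k}), (S.1 \ T.1).card = d →
      (kroneckerCover (kneserGraph n k)).Reachable (c, S) (c, T) := by
    intro d
    induction d with
    | zero =>
      intro S T hd
      have : S.1 ⊆ T.1 := by
        rw [← Finset.sdiff_eq_empty_iff_subset]
        exact Finset.card_eq_zero.mp hd
      have : S.1 = T.1 := Finset.eq_of_subset_of_card_le this (by rw [S.2, T.2])
      have : S = T := Subtype.ext this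
      rw [this]
    | succ d ih =>
      intro S T hd
      have hST : (S.1 \ T.1).Nonempty := by
        rw [← Finset.card_pos, hd]; omega
      obtain ⟨s, hs⟩ := hST
      rw [Finset.mem_sdiff] at hs
      have hTS : (T.1 \ S.1).Nonempty := by
        rw [← Finset.card_pos, Finset.card_sdiff_comm (T.2.trans S.2.symm), hd]; omega
      obtain ⟨t, ht⟩ := hTS
      rw [Finset.mem_sdiff] at ht
      set T' : Finset (Fin n) := insert s (T.1.erase t) with hT'
      have hsT' : s ∉ T.1.erase t := fun hmem => hs.2 (Finset.mem_of_mem_erase hmem)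
      have hT'card : T'.card = k := by
        rw [hT', Finset.card_insert_of_notMem hsT', Finset.card_erase_of_mem ht.1, T.2]
        omega
      have hsd : (S.1 \ T').card = d := by
        have heq : S.1 \ T' = (S.1 \ T.1).erase s := by
          ext x
          rw [hT']
          simp only [Finset.mem_sdiff, Finset.mem_erase, Finset.mem_insert]
          have hxt : x ∈ S.1 → x ≠ t := fun hxS hh => ht.2 (hh ▸ hxS)
          tauto
        rw [heq, Finset.card_erase_of_mem (Finset.mem_sdiff.mpr hs), hd]
        omega
      -- find U disjoint from both T and T'
      have hsub : T.1 ∪ T' ⊆ insert s T.1 := by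
        intro x hx
        rw [Finset.mem_union, hT'] at hx
        rcases hx with h | h
        · exact Finset.mem_insert_of_mem h
        · rcases Finset.mem_insert.mp h with rfl | h'
          · exact Finset.mem_insert_self _ _
          · exact Finset.mem_insert_of_mem (Finset.mem_of_mem_erase h')
      have hcard : k ≤ (Finset.univ \ (T.1 ∪ T')).card := by
        have h1 : (T.1 ∪ T').card ≤ k + 1 := by
          calc (T.1 ∪ T').card ≤ (insert s T.1).card := Finset.card_le_card hsub
            _ ≤ T.1.card + 1 := Finset.card_insert_le _ _
            _ = k + 1 := by rw [T.2]
        rw [Finset.card_sdiff_of_subset (Finset.subset_univ _), Finset.card_univ, Fintype.card_fin]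
        omega
      obtain ⟨U, hUsub, hUcard⟩ := Finset.exists_subset_card_eq hcard
      have hUdT : Disjoint U T.1 := by
        rw [Finset.disjoint_left]
        intro x hx hxT
        have := hUsub hx
        rw [Finset.mem_sdiff, Finset.mem_union] at this
        exact this.2 (Or.inl hxT)
      have hUdT' : Disjoint U T' := by
        rw [Finset.disjoint_left]
        intro x hx hxT
        have := hUsub hx
        rw [Finset.mem_sdiff, Finset.mem_union] at this
        exact this.2 (Or.inr hxT)
      have hcc : c ≠ c + 1 := by
        have := c.isLt
        intro hh
        rw [Fin.ext_iff] at hh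
        simp [Fin.val_add] at hh
        omega
      have e1 : (kroneckerCover (kneserGraph n k)).Adj (c, ⟨T', hT'card⟩) (c+1, ⟨U, hUcard⟩) :=
        ⟨hcc, (kneser_adj_iff hk _ _).mpr hUdT'.symm⟩
      have e2 : (kroneckerCover (kneserGraph n k)).Adj (c+1, ⟨U, hUcard⟩) (c, T) :=
        ⟨hcc.symm, (kneser_adj_iff hk _ _).mpr hUdT⟩
      exact ((ih S ⟨T', hT'card⟩ hsd).trans e1.reachable).trans e2.reachable
  exact key _ S T rfl

lemma kneser_preconnected {n k : ℕ} (hk : 1 ≤ k) (hn : 2 * k < n) :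
    (kroneckerCover (kneserGraph n k)).Preconnected := by
  rintro ⟨c, S⟩ ⟨c', T⟩
  rcases eq_or_ne c c' with rfl | hne
  · exact kneser_reach_same hk hn c S T
  · have hcard : k ≤ (Finset.univ \ T.1).card := by
      rw [Finset.card_sdiff_of_subset (Finset.subset_univ _), Finset.card_univ, Fintype.card_fin, T.2]
      omega
    obtain ⟨U, hUsub, hUcard⟩ := Finset.exists_subset_card_eq hcard
    have hUdT : Disjoint U T.1 := by
      rw [Finset.disjoint_left]
      intro x hx hxT
      have := hUsub hx
      rw [Finset.mem_sdiff] at this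
      exact this.2 hxT
    have e : (kroneckerCover (kneserGraph n k)).Adj (c, (⟨U, hUcard⟩ : {s : Finset (Fin n) // s.card = k})) (c', T) :=
      ⟨hne, (kneser_adj_iff hk _ _).mpr hUdT⟩
    exact (kneser_reach_same hk hn c S ⟨U, hUcard⟩).trans e.reachable

end PartA
section PartB

open SimpleGraph

lemma fin2_cases (c : Fin 2) : c = 0 ∨ c = 1 := by revert c; decide

lemma fin2_ne0 {c : Fin 2} (h : c ≠ 0) : c = 1 := by
  rcases fin2_cases c with h0 | h1
  · exact absurd h0 h
  · exact h1

lemma fin2_ne1 {c : Fin 2} (h : c ≠ 1) : c = 0 := by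
  rcases fin2_cases c with h0 | h1
  · exact h0
  · exact absurd h1 h

/-- the side-swapping automorphism of a Kronecker cover -/
def coverSwap {V : Type*} (G : SimpleGraph V) : kroneckerCover G ≃g kroneckerCover G where
  toEquiv := Equiv.prodCongr (Equiv.swap (0 : Fin 2) 1) (Equiv.refl V)
  map_rel_iff' := by
    rintro ⟨a, v⟩ ⟨b, w⟩
    show ((Equiv.swap (0:Fin 2) 1) a ≠ (Equiv.swap (0:Fin 2) 1) b ∧ _) ↔ _
    constructor
    · rintro ⟨h1, h2⟩
      exact ⟨fun hh => h1 (congrArg (Equiv.swap (0:Fin 2) 1) hh), h2⟩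
    · rintro ⟨h1, h2⟩
      exact ⟨fun hh => h1 ((Equiv.swap (0:Fin 2) 1).injective hh), h2⟩

lemma extract_fg_aligned {n k : ℕ} (hk : 1 ≤ k) {W : Type*} (G : SimpleGraph W)
    (Φ : kroneckerCover G ≃g kroneckerCover (kneserGraph n k))
    (hΦ0 : ∀ v : W, (Φ (0, v)).1 = 0) (hΦ1 : ∀ v : W, (Φ (1, v)).1 = 1) :
    ∃ f g : W → {s : Finset (Fin n) // s.card = k},
      Function.Bijective f ∧ Function.Bijective g ∧
      (∀ v w, G.Adj v w ↔ Disjoint ((f v).1 : Finset (Fin n)) (g w).1) := by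
  refine ⟨fun v => (Φ (0, v)).2, fun v => (Φ (1, v)).2, ⟨?_, ?_⟩, ⟨?_, ?_⟩, ?_⟩
  · intro v w hEq
    have : Φ (0, v) = Φ (0, w) := Prod.ext (by rw [hΦ0, hΦ0]) hEq
    have := Φ.injective this
    exact (Prod.mk.injEq _ _ _ _).mp this |>.2
  · intro S
    set z := Φ.symm (0, S) with hz
    have hΦz : Φ z = (0, S) := Φ.apply_symm_apply (0, S)
    have hz1 : z.1 = 0 := by
      by_contra hne
      have h1 : z.1 = 1 := fin2_ne0 hne
      have heq : Φ (1, z.2) = (0, S) := by rw [← h1, Prod.mk.eta, hΦz]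
      have h3 : (Φ (1, z.2)).1 = 0 := by rw [heq]
      rw [hΦ1] at h3
      exact absurd h3 (show (1 : Fin 2) ≠ 0 by decide)
    refine ⟨z.2, ?_⟩
    show (Φ (0, z.2)).2 = S
    rw [← hz1, Prod.mk.eta, hΦz]
  · intro v w hEq
    have : Φ (1, v) = Φ (1, w) := Prod.ext (by rw [hΦ1, hΦ1]) hEq
    have := Φ.injective this
    exact (Prod.mk.injEq _ _ _ _).mp this |>.2
  · intro S
    set z := Φ.symm (1, S) with hz
    have hΦz : Φ z = (1, S) := Φ.apply_symm_apply (1, S)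
    have hz1 : z.1 = 1 := by
      by_contra hne
      have h1 : z.1 = 0 := fin2_ne1 hne
      have heq : Φ (0, z.2) = (1, S) := by rw [← h1, Prod.mk.eta, hΦz]
      have h3 : (Φ (0, z.2)).1 = 1 := by rw [heq]
      rw [hΦ0] at h3
      exact absurd h3 (show (0 : Fin 2) ≠ 1 by decide)
    refine ⟨z.2, ?_⟩
    show (Φ (1, z.2)).2 = S
    rw [← hz1, Prod.mk.eta, hΦz]
  · intro v w
    have step1 : G.Adj v w ↔ (kroneckerCover G).Adj (0, v) (1, w) :=
      ⟨fun h => ⟨show (0:Fin 2) ≠ 1 by decide, h⟩, fun h => h.2⟩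
    have step2 : (kroneckerCover G).Adj (0, v) (1, w) ↔
        (kroneckerCover (kneserGraph n k)).Adj (Φ (0, v)) (Φ (1, w)) :=
      (Φ.map_adj_iff).symm
    have step3 : (kroneckerCover (kneserGraph n k)).Adj (Φ (0, v)) (Φ (1, w)) ↔
        (kneserGraph n k).Adj (Φ (0, v)).2 (Φ (1, w)).2 := by
      constructor
      · exact fun h => h.2
      · intro h
        refine ⟨?_, h⟩
        rw [hΦ0, hΦ1]
        decide
    rw [step1, step2, step3, kneser_adj_iff hk]

lemma extract_fg {n k : ℕ} (hk : 1 ≤ k) (hn : 2 * k < n) {W : Type*} (G : SimpleGraph W)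
    (Φ : kroneckerCover G ≃g kroneckerCover (kneserGraph n k)) :
    ∃ f g : W → {s : Finset (Fin n) // s.card = k},
      Function.Bijective f ∧ Function.Bijective g ∧
      (∀ v w, G.Adj v w ↔ Disjoint ((f v).1 : Finset (Fin n)) (g w).1) := by
  have hconn := kneser_preconnected hk hn
  have hcoverreach : ∀ x y : Fin 2 × W, (kroneckerCover G).Reachable x y := by
    intro x y
    exact (SimpleGraph.Iso.reachable_iff (φ := Φ)).mp (hconn (Φ x) (Φ y))
  have hconst : ∀ (c : Fin 2) (v w : W), (Φ (c, v)).1 = (Φ (c, w)).1 := by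
    intro c v w
    obtain ⟨p⟩ := hcoverreach (c, v) (c, w)
    have hev : Even p.length := (cover_walk_parity G p).mp rfl
    have hq : Even (p.map Φ.toHom).length := by
      rw [SimpleGraph.Walk.length_map]; exact hev
    exact (cover_walk_parity (kneserGraph n k) (p.map Φ.toHom)).mpr hq
  -- an edge of G exists
  have hAex : k ≤ (Finset.univ : Finset (Fin n)).card := by
    rw [Finset.card_univ, Fintype.card_fin]; omega
  obtain ⟨A, -, hA⟩ := Finset.exists_subset_card_eq hAex
  have hBex : k ≤ (Finset.univ \ A).card := by
    rw [Finset.card_sdiff_of_subset (Finset.subset_univ _), Finset.card_univ, Fintype.card_fin, hA]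
    omega
  obtain ⟨B, hBsub, hB⟩ := Finset.exists_subset_card_eq hBex
  have hdAB : Disjoint A B := by
    rw [Finset.disjoint_right]
    intro x hx hxA
    have := hBsub hx
    rw [Finset.mem_sdiff] at this
    exact this.2 hxA
  have hedge : (kroneckerCover (kneserGraph n k)).Adj (0, ⟨A, hA⟩) (1, ⟨B, hB⟩) :=
    ⟨show (0:Fin 2) ≠ 1 by decide, (kneser_adj_iff hk _ _).mpr hdAB⟩
  have hxy := (Φ.symm.map_adj_iff (v := (0, (⟨A, hA⟩ : {s : Finset (Fin n) // s.card = k})))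
    (w := (1, ⟨B, hB⟩))).mpr hedge
  set v₀ := (Φ.symm (0, (⟨A, hA⟩ : {s : Finset (Fin n) // s.card = k}))).2 with hv₀
  set w₀ := (Φ.symm (1, (⟨B, hB⟩ : {s : Finset (Fin n) // s.card = k}))).2 with hw₀
  have hGedge : G.Adj v₀ w₀ := hxy.2
  have hdiff : ∀ v w : W, (Φ (0, v)).1 ≠ (Φ (1, w)).1 := by
    intro v w
    have hcov : (kroneckerCover G).Adj (0, v₀) (1, w₀) :=
      ⟨show (0:Fin 2) ≠ 1 by decide, hGedge⟩
    have hH := (Φ.map_adj_iff).mpr hcov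
    have := hH.1
    rwa [hconst 0 v₀ v, hconst 1 w₀ w] at this
  rcases eq_or_ne ((Φ (0, v₀)).1) 0 with hc | hc
  · apply extract_fg_aligned hk G Φ
    · intro v; rw [hconst 0 v v₀, hc]
    · intro v
      have h1 := hdiff v₀ v
      rw [hconst 0 v₀ v₀, hc] at h1
      exact fin2_ne0 (Ne.symm h1)
  · apply extract_fg_aligned hk G (Φ.trans (coverSwap (kneserGraph n k)))
    · intro v
      show ((Equiv.swap (0:Fin 2) 1) (Φ (0,v)).1, (Φ (0,v)).2).1 = 0
      have h1 : (Φ (0, v)).1 = 1 := by rw [hconst 0 v v₀]; exact fin2_ne0 hc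
      rw [h1]
      exact (show (Equiv.swap (0:Fin 2) 1) 1 = 0 by decide)
    · intro v
      show ((Equiv.swap (0:Fin 2) 1) (Φ (1,v)).1, (Φ (1,v)).2).1 = 1
      have h1 : (Φ (1, v)).1 = 0 := by
        have h2 := hdiff v₀ v
        have h3 : (Φ (0, v₀)).1 = 1 := fin2_ne0 hc
        rw [h3] at h2
        exact fin2_ne1 (Ne.symm h2)
      rw [h1]
      exact (show (Equiv.swap (0:Fin 2) 1) 0 = 1 by decide)

end PartB
section PartC

lemma sigmaPerm_val {n i : ℕ} (h2i : 2 * i ≤ n) (x : Fin n) :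
    ((sigmaPerm n i x) : ℕ) = sigmaNat i x.val := by
  have h : sigmaNat i x.val < n := by
    unfold sigmaNat
    have := x.isLt
    split_ifs <;> omega
  show ((sigmaFinFun n i x) : ℕ) = _
  unfold sigmaFinFun
  rw [dif_pos h]

lemma invol_of_level {n k : ℕ} (hk : 1 ≤ k) (hkn : k + 1 ≤ n) (π : Equiv.Perm (Fin n))
    (h : ∀ S : Finset (Fin n), S.card = k → (S.image π).image π = S) :
    ∀ x : Fin n, π (π x) = x := by
  intro x
  by_contra hne
  have hxy : x ∈ Finset.univ \ {π (π x)} := by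
    rw [Finset.mem_sdiff, Finset.mem_singleton]
    exact ⟨Finset.mem_univ x, fun hh => hne hh.symm⟩
  have hcard : k ≤ (Finset.univ \ {π (π x)}).card := by
    rw [Finset.card_sdiff_of_subset (Finset.subset_univ _), Finset.card_univ, Fintype.card_fin,
      Finset.card_singleton]
    omega
  obtain ⟨S, hSsub, hScard, hxS⟩ := exists_ksubset_mem hxy hcard hk
  have hmem : π (π x) ∈ (S.image π).image π :=
    Finset.mem_image_of_mem π (Finset.mem_image_of_mem π hxS)
  rw [h S hScard] at hmem
  have := hSsub hmem
  rw [Finset.mem_sdiff, Finset.mem_singleton] at this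
  exact this.2 rfl

lemma exists_conj {n : ℕ} (π : Equiv.Perm (Fin n)) (hπ2 : ∀ x, π (π x) = x)
    (R : Finset (Fin n)) (hR1 : ∀ x ∈ R, x < π x)
    (hR2 : ∀ x : Fin n, π x ≠ x → (x ∈ R ∨ π x ∈ R))
    (hRn : 2 * R.card ≤ n) :
    ∃ t : Equiv.Perm (Fin n), ∀ x : Fin n, t (sigmaPerm n R.card x) = π (t x) := by
  classical
  have hdisjR : ∀ x ∈ R, π x ∉ R := by
    intro x hx hπx
    have h1 := hR1 x hx
    have h2 := hR1 (π x) hπx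
    rw [hπ2 x] at h2
    exact absurd (h1.trans h2) (lt_irrefl x)
  set i := R.card with hi
  set M := R ∪ R.image π with hM
  have hmemM : ∀ x : Fin n, x ∈ M ↔ π x ≠ x := by
    intro x
    rw [hM, Finset.mem_union, Finset.mem_image]
    constructor
    · rintro (hx | ⟨r, hr, rfl⟩)
      · have h1 := hR1 x hx
        intro heq
        rw [heq] at h1
        exact lt_irrefl x h1
      · have h1 := hR1 r hr
        rw [hπ2 r]
        intro heq
        rw [← heq] at h1
        exact lt_irrefl r h1
    · intro hne
      rcases hR2 x hne with hx | hπx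
      · exact Or.inl hx
      · exact Or.inr ⟨π x, hπx, hπ2 x⟩
  have hdisjRM : Disjoint R (R.image π) := by
    rw [Finset.disjoint_right]
    rintro x hximg hxR
    obtain ⟨r, hr, rfl⟩ := Finset.mem_image.mp hximg
    exact hdisjR r hr hxR
  have hcardM : M.card = 2 * i := by
    rw [hM, Finset.card_union_of_disjoint hdisjRM,
      Finset.card_image_of_injective _ π.injective]
    omega
  set Mc := Finset.univ \ M with hMc
  have hMccard : Mc.card = n - 2 * i := by
    rw [hMc, Finset.card_sdiff_of_subset (Finset.subset_univ _), Finset.card_univ, Fintype.card_fin,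
      hcardM]
  set Q := Finset.univ.filter (fun x : Fin n => ¬ x.val < 2 * i) with hQ
  have hQcard : Q.card = n - 2 * i := by
    have h0 := Finset.card_filter_add_card_filter_not
      (s := (Finset.univ : Finset (Fin n))) (fun x : Fin n => x.val < 2 * i)
    rw [Finset.card_univ, Fintype.card_fin] at h0
    have hPcard : ((Finset.univ : Finset (Fin n)).filter (fun x : Fin n => x.val < 2 * i)).card
        = 2 * i := by
      have hPeq : (Finset.univ : Finset (Fin n)).filter (fun x : Fin n => x.val < 2 * i) =
          (Finset.range (2*i)).attachFin
            (fun m hm => lt_of_lt_of_le (Finset.mem_range.mp hm) hRn) := by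
        ext x
        rw [Finset.mem_filter, Finset.mem_attachFin, Finset.mem_range]
        exact ⟨fun h => h.2, fun h => ⟨Finset.mem_univ x, h⟩⟩
      rw [hPeq, Finset.card_attachFin, Finset.card_range]
    rw [← hQ] at h0
    omega
  set cQ : {x // x ∈ Q} ≃ {x // x ∈ Mc} :=
    (Q.equivFin.trans (finCongr (hQcard.trans hMccard.symm))).trans Mc.equivFin.symm with hcQ
  set re : Fin i → {x // x ∈ R} := fun j => R.equivFin.symm j with hre
  have hreinj : Function.Injective re := fun a b h => by
    have := R.equivFin.symm.injective h
    exact this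
  have hresurj : ∀ r ∈ R, ∃ j, (re j).1 = r := by
    intro r hr
    exact ⟨R.equivFin ⟨r, hr⟩, by rw [hre]; simp⟩
  let tf : Fin n → Fin n := fun x =>
    if h : x.val < 2 * i then
      (if x.val % 2 = 0 then (re ⟨x.val / 2, by omega⟩).1 else π (re ⟨x.val / 2, by omega⟩).1)
    else (cQ ⟨x, Finset.mem_filter.mpr ⟨Finset.mem_univ x, h⟩⟩).1
  have tf_lt : ∀ (x : Fin n) (h : x.val < 2*i),
      tf x = (if x.val % 2 = 0 then (re ⟨x.val / 2, by omega⟩).1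
        else π (re ⟨x.val / 2, by omega⟩).1) := fun x h => dif_pos h
  have tf_ge : ∀ (x : Fin n) (h : ¬ x.val < 2*i) (hm : x ∈ Q), tf x = (cQ ⟨x, hm⟩).1 :=
    fun x h hm => dif_neg h
  -- membership of values
  have tf_mem_R : ∀ (x : Fin n) (h : x.val < 2*i), x.val % 2 = 0 → tf x ∈ R := by
    intro x h he
    rw [tf_lt x h, if_pos he]
    exact (re _).2
  have tf_mem_πR : ∀ (x : Fin n) (h : x.val < 2*i), x.val % 2 ≠ 0 → tf x ∈ R.image π := by
    intro x h he
    rw [tf_lt x h, if_neg he]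
    exact Finset.mem_image_of_mem π (re _).2
  have tf_mem_M : ∀ (x : Fin n) (h : x.val < 2*i), tf x ∈ M := by
    intro x h
    rw [hM, Finset.mem_union]
    by_cases he : x.val % 2 = 0
    · exact Or.inl (tf_mem_R x h he)
    · exact Or.inr (tf_mem_πR x h he)
  have tf_mem_Mc : ∀ (x : Fin n) (h : ¬ x.val < 2*i), tf x ∈ Mc := by
    intro x h
    rw [tf_ge x h (Finset.mem_filter.mpr ⟨Finset.mem_univ x, h⟩)]
    exact (cQ _).2
  have tf_eval_even : ∀ (x : Fin n) (hlt : x.val < 2 * i) (he : x.val % 2 = 0)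
      (j : Fin i), (j : ℕ) = x.val / 2 → tf x = (re j).1 := by
    intro x hlt he j hj
    rw [tf_lt x hlt, if_pos he]
    exact congrArg (fun z : Fin i => (re z).1) (Fin.ext hj.symm)
  have tf_eval_odd : ∀ (x : Fin n) (hlt : x.val < 2 * i) (he : ¬ x.val % 2 = 0)
      (j : Fin i), (j : ℕ) = x.val / 2 → tf x = π (re j).1 := by
    intro x hlt he j hj
    rw [tf_lt x hlt, if_neg he]
    exact congrArg (fun z : Fin i => π (re z).1) (Fin.ext hj.symm)
  have hbij : Function.Bijective tf := by
    constructor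
    · intro x y hEq
      by_cases hx : x.val < 2*i <;> by_cases hy : y.val < 2*i
      · rw [tf_lt x hx, tf_lt y hy] at hEq
        by_cases hex : x.val % 2 = 0 <;> by_cases hey : y.val % 2 = 0
        · rw [if_pos hex, if_pos hey] at hEq
          have := hreinj (Subtype.coe_injective hEq)
          rw [Fin.mk.injEq] at this
          exact Fin.ext (by omega)
        · rw [if_pos hex, if_neg hey] at hEq
          exfalso
          have h1 : (re ⟨x.val/2, by omega⟩).1 ∈ R := (re _).2
          rw [hEq] at h1
          exact hdisjR _ (re _).2 h1
        · rw [if_neg hex, if_pos hey] at hEq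
          exfalso
          have h1 : (re ⟨y.val/2, by omega⟩).1 ∈ R := (re _).2
          rw [← hEq] at h1
          exact hdisjR _ (re _).2 h1
        · rw [if_neg hex, if_neg hey] at hEq
          have := hreinj (Subtype.coe_injective (π.injective hEq))
          rw [Fin.mk.injEq] at this
          exact Fin.ext (by omega)
      · exfalso
        have h1 := tf_mem_M x hx
        have h2 := tf_mem_Mc y hy
        rw [hEq] at h1
        rw [hMc, Finset.mem_sdiff] at h2
        exact h2.2 h1
      · exfalso
        have h1 := tf_mem_M y hy
        have h2 := tf_mem_Mc x hx
        rw [← hEq] at h1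
        rw [hMc, Finset.mem_sdiff] at h2
        exact h2.2 h1
      · have hmx : x ∈ Q := Finset.mem_filter.mpr ⟨Finset.mem_univ x, hx⟩
        have hmy : y ∈ Q := Finset.mem_filter.mpr ⟨Finset.mem_univ y, hy⟩
        rw [tf_ge x hx hmx, tf_ge y hy hmy] at hEq
        have := cQ.injective (Subtype.coe_injective hEq)
        exact congrArg Subtype.val this
    · intro y
      by_cases hyM : y ∈ M
      · rw [hM, Finset.mem_union] at hyM
        rcases hyM with hyR | hyπR
        · obtain ⟨j, hj⟩ := hresurj y hyR
          have hjval : 2 * j.val < 2 * i := by have := j.isLt; omega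
          refine ⟨⟨2 * j.val, by omega⟩, ?_⟩
          rw [tf_eval_even ⟨2 * j.val, by omega⟩ hjval (Nat.mul_mod_right 2 j.val) j
            (show (j : ℕ) = 2 * (j : ℕ) / 2 by omega), hj]
        · obtain ⟨r, hr, rfl⟩ := Finset.mem_image.mp hyπR
          obtain ⟨j, hj⟩ := hresurj r hr
          have hjval : 2 * j.val + 1 < 2 * i := by have := j.isLt; omega
          refine ⟨⟨2 * j.val + 1, by omega⟩, ?_⟩
          rw [tf_eval_odd ⟨2 * j.val + 1, by omega⟩ hjval
            (show ¬ (2 * (j : ℕ) + 1) % 2 = 0 by omega) j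
            (show (j : ℕ) = (2 * (j : ℕ) + 1) / 2 by omega), hj]
      · have hyMc : y ∈ Mc := by rw [hMc, Finset.mem_sdiff]; exact ⟨Finset.mem_univ y, hyM⟩
        set q := cQ.symm ⟨y, hyMc⟩ with hq
        have hqQ : q.1 ∈ Q := q.2
        have hqlt : ¬ q.1.val < 2 * i := (Finset.mem_filter.mp hqQ).2
        refine ⟨q.1, ?_⟩
        rw [tf_ge q.1 hqlt (by exact q.2)]
        have : (⟨q.1, q.2⟩ : {x // x ∈ Q}) = q := rfl
        rw [this, hq]
        simp
  refine ⟨Equiv.ofBijective tf hbij, ?_⟩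
  intro x
  show tf (sigmaPerm n i x) = π (tf x)
  have hσval : ((sigmaPerm n i x) : ℕ) = sigmaNat i x.val := sigmaPerm_val hRn x
  by_cases hx : x.val < 2 * i
  · by_cases hex : x.val % 2 = 0
    · -- σ x = x + 1, odd
      have hσ : ((sigmaPerm n i x) : ℕ) = x.val + 1 := by
        rw [hσval]; unfold sigmaNat; rw [if_pos hx, if_pos hex]
      have hσlt : ((sigmaPerm n i x) : ℕ) < 2 * i := by omega
      have hσodd : ¬ ((sigmaPerm n i x) : ℕ) % 2 = 0 := by omega
      rw [tf_eval_odd (sigmaPerm n i x) hσlt hσodd ⟨x.val / 2, by omega⟩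
        (show (x.val / 2 : ℕ) = ((sigmaPerm n i x) : ℕ) / 2 by omega),
        tf_eval_even x hx hex ⟨x.val / 2, by omega⟩ rfl]
    · -- σ x = x - 1, even
      have hσ : ((sigmaPerm n i x) : ℕ) = x.val - 1 := by
        rw [hσval]; unfold sigmaNat; rw [if_pos hx, if_neg hex]
      have hσlt : ((sigmaPerm n i x) : ℕ) < 2 * i := by omega
      have hσeven : ((sigmaPerm n i x) : ℕ) % 2 = 0 := by omega
      rw [tf_eval_even (sigmaPerm n i x) hσlt hσeven ⟨x.val / 2, by omega⟩
        (show (x.val / 2 : ℕ) = ((sigmaPerm n i x) : ℕ) / 2 by omega),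
        tf_eval_odd x hx hex ⟨x.val / 2, by omega⟩ rfl, hπ2]
  · -- σ x = x and tf x is fixed by π
    have hσ : sigmaPerm n i x = x := by
      apply Fin.ext
      rw [hσval]
      unfold sigmaNat
      rw [if_neg hx]
    rw [hσ]
    have h1 := tf_mem_Mc x hx
    rw [hMc, Finset.mem_sdiff] at h1
    have h2 : ¬ π (tf x) ≠ tf x := fun hh => h1.2 ((hmemM (tf x)).mpr hh)
    push_neg at h2
    exact h2.symm

end PartC
/-- for `n > 2k`, `k ≥ 1`, every simple graph `G` whose Kronecker cover is
isomorphic to the bipartite Kneser graph `H(n,k) = K₂ × K(n,k)` is isomorphic to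
`G_i(n,k)` for some `0 ≤ i < k`. -/
theorem iso_GGraph_of_kroneckerCover_iso_bipartiteKneser (n k : ℕ)
    (hn : 2 * k < n) (hk : 1 ≤ k) {W : Type*} (G : SimpleGraph W)
    (h : Nonempty (kroneckerCover G ≃g kroneckerCover (kneserGraph n k))) :
    ∃ i, i < k ∧ Nonempty (G ≃g GGraph n k i) := by
  classical
  obtain ⟨Φ⟩ := h
  obtain ⟨f, g, hf, hg, hadj⟩ := extract_fg hk hn G Φ
  set fE := Equiv.ofBijective f hf with hfE
  set gE := Equiv.ofBijective g hg with hgE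
  set A : Finset (Fin n) → Finset (Fin n) :=
    fun S => if h : S.card = k then (gE (fE.symm ⟨S, h⟩)).1 else ∅ with hA
  set B : Finset (Fin n) → Finset (Fin n) :=
    fun S => if h : S.card = k then (fE (gE.symm ⟨S, h⟩)).1 else ∅ with hB
  have hsym : ∀ v w, Disjoint (f v).1 (g w).1 ↔ Disjoint (f w).1 (g v).1 := by
    intro v w
    rw [← hadj, ← hadj]
    exact G.adj_comm v w
  have hAeval : ∀ (S : Finset (Fin n)) (hS : S.card = k),
      A S = (g (fE.symm ⟨S, hS⟩)).1 := fun S hS => dif_pos hS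
  have hBeval : ∀ (S : Finset (Fin n)) (hS : S.card = k),
      B S = (f (gE.symm ⟨S, hS⟩)).1 := fun S hS => dif_pos hS
  have hAc : ∀ S : Finset (Fin n), S.card = k → (A S).card = k :=
    fun S hS => by rw [hAeval S hS]; exact (g _).2
  have hBc : ∀ S : Finset (Fin n), S.card = k → (B S).card = k :=
    fun S hS => by rw [hBeval S hS]; exact (f _).2
  have hAB : ∀ (S : Finset (Fin n)) (hS : S.card = k), B (A S) = S := by
    intro S hS
    have hcard : (A S).card = k := hAc S hS
    rw [hBeval _ hcard]
    have h1 : (⟨A S, hcard⟩ : {s : Finset (Fin n) // s.card = k}) = gE (fE.symm ⟨S, hS⟩) :=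
      Subtype.ext (hAeval S hS)
    rw [h1, Equiv.symm_apply_apply]
    show (fE (fE.symm ⟨S, hS⟩)).1 = S
    rw [Equiv.apply_symm_apply]
  have hBA : ∀ (S : Finset (Fin n)) (hS : S.card = k), A (B S) = S := by
    intro S hS
    have hcard : (B S).card = k := hBc S hS
    rw [hAeval _ hcard]
    have h1 : (⟨B S, hcard⟩ : {s : Finset (Fin n) // s.card = k}) = fE (gE.symm ⟨S, hS⟩) :=
      Subtype.ext (hBeval S hS)
    rw [h1, Equiv.symm_apply_apply]
    show (gE (gE.symm ⟨S, hS⟩)).1 = S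
    rw [Equiv.apply_symm_apply]
  have hBsurj : ∀ T : Finset (Fin n), T.card = k → ∃ S, S.card = k ∧ B S = T :=
    fun T hT => ⟨A T, hAc T hT, hAB T hT⟩
  have hD : ∀ S T : Finset (Fin n), S.card = k → T.card = k →
      (Disjoint S T ↔ Disjoint (A S) (B T)) := by
    intro S T hS hT
    rw [hAeval S hS, hBeval T hT]
    have h1 : (f (fE.symm ⟨S, hS⟩)).1 = S :=
      congrArg Subtype.val (fE.apply_symm_apply ⟨S, hS⟩)
    have h2 : (g (gE.symm ⟨T, hT⟩)).1 = T :=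
      congrArg Subtype.val (gE.apply_symm_apply ⟨T, hT⟩)
    calc Disjoint S T ↔ Disjoint (f (fE.symm ⟨S, hS⟩)).1 (g (gE.symm ⟨T, hT⟩)).1 := by
          rw [h1, h2]
      _ ↔ Disjoint (f (gE.symm ⟨T, hT⟩)).1 (g (fE.symm ⟨S, hS⟩)).1 := hsym _ _
      _ ↔ Disjoint (g (fE.symm ⟨S, hS⟩)).1 (f (gE.symm ⟨T, hT⟩)).1 := disjoint_comm
  obtain ⟨π, hπa, hπb⟩ := pair_perm hk hn A B hAc hBc hBsurj hD
  have hdouble : ∀ S : Finset (Fin n), S.card = k → (S.image π).image π = S := by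
    intro S hS
    have h1 : B S = S.image π := hπb S hS
    have h2 : A (B S) = S := hBA S hS
    rw [h1] at h2
    rw [hπa _ (by rw [Finset.card_image_of_injective _ π.injective]; exact hS)] at h2
    exact h2
  have hπ2 : ∀ x, π (π x) = x := invol_of_level hk (by omega) π hdouble
  have hgf : ∀ b : W, (g b).1 = (f b).1.image π := by
    intro b
    have h1 : A (f b).1 = (g b).1 := by
      rw [hAeval _ (f b).2]
      have h2 : (⟨(f b).1, (f b).2⟩ : {s : Finset (Fin n) // s.card = k}) = fE b :=
        Subtype.ext rfl
      rw [h2, Equiv.symm_apply_apply]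
    rw [← h1, hπa _ (f b).2]
  have hloop : ∀ S : Finset (Fin n), S.card = k → ¬ Disjoint S (S.image π) := by
    intro S hS hd
    set v := fE.symm ⟨S, hS⟩ with hv
    have h1 : (f v).1 = S := congrArg Subtype.val (fE.apply_symm_apply ⟨S, hS⟩)
    have hGadj : G.Adj v v := by
      rw [hadj, hgf, h1]
      exact hd
    exact G.loopless.irrefl v hGadj
  set R := Finset.univ.filter (fun x : Fin n => x < π x) with hR
  have hR1 : ∀ x ∈ R, x < π x := fun x hx => (Finset.mem_filter.mp hx).2
  have hR2 : ∀ x : Fin n, π x ≠ x → (x ∈ R ∨ π x ∈ R) := by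
    intro x hne
    rcases Ne.lt_or_gt (Ne.symm hne) with hlt | hgt
    · exact Or.inl (Finset.mem_filter.mpr ⟨Finset.mem_univ x, hlt⟩)
    · refine Or.inr (Finset.mem_filter.mpr ⟨Finset.mem_univ _, ?_⟩)
      rw [hπ2]
      exact hgt
  have hik : R.card < k := by
    by_contra hcon
    push_neg at hcon
    obtain ⟨S, hSsub, hScard⟩ := Finset.exists_subset_card_eq hcon
    apply hloop S hScard
    rw [Finset.disjoint_left]
    intro x hxS hximg
    obtain ⟨s, hsS, rfl⟩ := Finset.mem_image.mp hximg
    have h1 := hR1 _ (hSsub hsS)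
    have h2 := hR1 _ (hSsub hxS)
    rw [hπ2] at h2
    exact absurd (h1.trans h2) (lt_irrefl s)
  have hRn : 2 * R.card ≤ n := by omega
  obtain ⟨t, hcomm⟩ := exists_conj π hπ2 R hR1 hR2 hRn
  refine ⟨R.card, hik, ⟨?_⟩⟩
  have hσloop : ∀ S : Finset (Fin n), S.card = k →
      ¬ Disjoint S (S.image (sigmaPerm n R.card)) := by
    intro S hS hd
    have hsub : ∀ x ∈ S, x.val < 2 * R.card := by
      intro x hxS
      by_contra hge
      have hfix : sigmaPerm n R.card x = x := by
        apply Fin.ext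
        rw [sigmaPerm_val hRn]
        unfold sigmaNat
        rw [if_neg hge]
      exact Finset.disjoint_left.mp hd hxS (by rw [← hfix]; exact Finset.mem_image_of_mem _ hxS)
    have hinj : Set.InjOn (fun x : Fin n => x.val / 2) S := by
      intro x hx y hy hEq
      by_contra hne
      have hx2 := hsub x hx
      have hy2 := hsub y hy
      have hvalne : x.val ≠ y.val := fun hh => hne (Fin.ext hh)
      simp only at hEq
      have hy_eq : (y : ℕ) = sigmaNat R.card x.val := by
        unfold sigmaNat
        rw [if_pos hx2]
        split_ifs with hpar
        · omega
        · omega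
      have heq2 : y = sigmaPerm n R.card x :=
        Fin.ext (by rw [sigmaPerm_val hRn]; exact hy_eq)
      exact Finset.disjoint_left.mp hd hy (heq2 ▸ Finset.mem_image_of_mem _ hx)
    have hcard := Finset.card_le_card_of_injOn (t := Finset.range R.card)
      (fun x : Fin n => x.val / 2)
      (fun x hx => Finset.mem_range.mpr
        (by show x.val / 2 < R.card; have := hsub x hx; omega)) hinj
    rw [hS, Finset.card_range] at hcard
    omega
  have htinj : Function.Injective (t.symm : Fin n → Fin n) := t.symm.injective
  set eqv : W ≃ {s : Finset (Fin n) // s.card = k} :=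
    fE.trans
      { toFun := fun S => ⟨S.1.image t.symm,
          by rw [Finset.card_image_of_injective _ htinj, S.2]⟩
        invFun := fun S => ⟨S.1.image t,
          by rw [Finset.card_image_of_injective _ t.injective, S.2]⟩
        left_inv := fun S => Subtype.ext
          (by show Finset.image _ (Finset.image _ _) = _
              rw [Finset.image_image, Equiv.self_comp_symm, Finset.image_id])
        right_inv := fun S => Subtype.ext
          (by show Finset.image _ (Finset.image _ _) = _
              rw [Finset.image_image, Equiv.symm_comp_self, Finset.image_id]) } with heqv
  have hkey : ∀ a b : W,
      Disjoint ((f a).1.image (t.symm : Fin n → Fin n))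
        ((((f b).1.image (t.symm : Fin n → Fin n))).image (sigmaPerm n R.card)) ↔
      G.Adj a b := by
    intro a b
    rw [Finset.image_image]
    have hfun : ((sigmaPerm n R.card : Equiv.Perm (Fin n)) : Fin n → Fin n) ∘
        (t.symm : Fin n → Fin n) = (t.symm : Fin n → Fin n) ∘ π := by
      funext z
      have hz := hcomm (t.symm z)
      rw [Equiv.apply_symm_apply] at hz
      apply t.injective
      show t (sigmaPerm n R.card (t.symm z)) = t (t.symm (π z))
      rw [hz, Equiv.apply_symm_apply]
    rw [hfun, ← Finset.image_image, Finset.disjoint_image htinj]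
    rw [← hgf b]
    exact (hadj a b).symm
  exact
    { toEquiv := eqv
      map_rel_iff' := by
        intro a b
        constructor
        · rintro ⟨-, hd⟩
          exact (hkey a b).mp hd
        · intro hAdj
          have hd := (hkey a b).mpr hAdj
          refine ⟨?_, hd⟩
          intro hEqv
          have hvals : (f a).1.image (t.symm : Fin n → Fin n) =
              (f b).1.image (t.symm : Fin n → Fin n) := congrArg Subtype.val hEqv
          rw [hvals] at hd
          exact hσloop _
            (by rw [Finset.card_image_of_injective _ htinj, (f b).2]) hd }
end

section
/- Let n, k be integers with n > 2k and k ≥ 1, and let i be an integer with 0 ≤ i < k. Then the automorphism group Aut(G_i(n,k)) is isomorphic to the centralizer Z_{S_n}(σ_i) of σ_i in the symmetric group S_n. -/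
/-- The automorphism group of a simple graph, as the subgroup of the permutation group of
its vertices consisting of adjacency-preserving permutations. -/
def graphAut {V : Type*} (G : SimpleGraph V) : Subgroup (Equiv.Perm V) where
  carrier := {π | ∀ a b, G.Adj (π a) (π b) ↔ G.Adj a b}
  one_mem' := fun _ _ => Iff.rfl
  mul_mem' := by
    intro π ρ hπ hρ a b
    simpa [Equiv.Perm.mul_apply] using (hπ (ρ a) (ρ b)).trans (hρ a b)
  inv_mem' := by
    intro π hπ a b
    have := (hπ (π⁻¹ a) (π⁻¹ b)).symm
    simpa using this

/-! ### Auxiliary development -/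

open Finset

/-- Abbreviation for the vertex type. -/
abbrev Vtx (n k : ℕ) := {s : Finset (Fin n) // s.card = k}

section Basic

variable {n k i : ℕ}

lemma sigma_sigma (x : Fin n) : sigmaPerm n i (sigmaPerm n i x) = x :=
  sigmaFinFun_invol n i x

lemma sigmaPerm_zero : sigmaPerm n 0 = 1 := by
  refine Equiv.ext fun x => ?_
  show sigmaFinFun n 0 x = x
  simp [sigmaFinFun, sigmaNat]

lemma mem_image_sigma {b : Finset (Fin n)} {x : Fin n} :
    x ∈ b.image (sigmaPerm n i) ↔ sigmaPerm n i x ∈ b := by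
  constructor
  · intro h
    obtain ⟨c, hc, hcx⟩ := mem_image.mp h
    rw [← hcx, sigma_sigma]; exact hc
  · intro h
    exact mem_image.mpr ⟨_, h, sigma_sigma x⟩

lemma disj_swap {a b : Finset (Fin n)} :
    Disjoint a (b.image (sigmaPerm n i)) ↔ Disjoint b (a.image (sigmaPerm n i)) := by
  simp only [disjoint_right, mem_image_sigma]
  constructor
  · intro h x hxa hxb
    exact h (show sigmaPerm n i (sigmaPerm n i x) ∈ b by rwa [sigma_sigma]) hxa
  · intro h x hxb hxa
    exact h (show sigmaPerm n i (sigmaPerm n i x) ∈ a by rwa [sigma_sigma]) hxb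

lemma disj_compl {s A : Finset (Fin n)} : Disjoint s A ↔ s ⊆ Aᶜ := by
  constructor
  · intro h x hx
    exact mem_compl.mpr (disjoint_left.mp h hx)
  · intro h
    rw [disjoint_left]
    intro x hx hxA
    exact mem_compl.mp (h hx) hxA

lemma adj_def {v w : Vtx n k} :
    (GGraph n k i).Adj v w ↔ v ≠ w ∧ Disjoint v.1 (w.1.image (sigmaPerm n i)) := Iff.rfl

lemma adj_iff {v u : Vtx n k} :
    (GGraph n k i).Adj v u ↔ u ≠ v ∧ Disjoint u.1 (v.1.image (sigmaPerm n i)) := by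
  rw [adj_def, disj_swap, ne_comm]

instance : DecidableRel (GGraph n k i).Adj :=
  fun v w => decidable_of_iff (v ≠ w ∧ Disjoint v.1 (w.1.image (sigmaPerm n i))) Iff.rfl

lemma mem_graphAut_iff {V : Type*} (G : SimpleGraph V) (f : Equiv.Perm V) :
    f ∈ graphAut G ↔ ∀ a b, G.Adj (f a) (f b) ↔ G.Adj a b := Iff.rfl

end Basic

section Lift

variable {n k : ℕ}

/-- The permutation on `k`-subsets induced by a permutation of the ground set. -/
def liftPerm (π : Equiv.Perm (Fin n)) : Equiv.Perm (Vtx n k) where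
  toFun v := ⟨v.1.image π, by rw [card_image_of_injective _ π.injective, v.2]⟩
  invFun v := ⟨v.1.image π.symm, by rw [card_image_of_injective _ π.symm.injective, v.2]⟩
  left_inv v := Subtype.ext (by
    simp [image_image, Function.comp_def])
  right_inv v := Subtype.ext (by
    simp [image_image, Function.comp_def])

lemma liftPerm_apply (π : Equiv.Perm (Fin n)) (v : Vtx n k) :
    (liftPerm π v).1 = v.1.image π := rfl

lemma liftPerm_mul (π ρ : Equiv.Perm (Fin n)) :
    liftPerm (n := n) (k := k) (π * ρ) = liftPerm π * liftPerm ρ := by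
  refine Equiv.ext fun v => Subtype.ext ?_
  rw [Equiv.Perm.mul_apply, liftPerm_apply, liftPerm_apply, liftPerm_apply,
    image_image, Equiv.Perm.coe_mul]

lemma liftPerm_one : liftPerm (n := n) (k := k) 1 = 1 := by
  refine Equiv.ext fun v => Subtype.ext ?_
  rw [liftPerm_apply]
  simp

lemma perm_eq_of_image_eq (hk : 1 ≤ k) (hkn : k < n) {π ρ : Equiv.Perm (Fin n)}
    (h : ∀ s : Finset (Fin n), s.card = k → s.image π = s.image ρ) : π = ρ := by
  refine Equiv.ext fun x => ?_
  by_contra hne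
  have hne' : ρ.symm (π x) ≠ x := by
    intro h'
    apply hne
    have := congrArg ρ h'
    simpa using this
  obtain ⟨s, hs1, hs2, hs3⟩ := exists_subsuperset_card_eq (n := k)
    (show {x} ⊆ ({ρ.symm (π x)}ᶜ : Finset (Fin n)) by
      rw [subset_compl_singleton, mem_singleton]; exact hne')
    (by rw [card_singleton]; exact hk)
    (by rw [card_compl, card_singleton, Fintype.card_fin]; omega)
  have hx : x ∈ s := hs1 (mem_singleton_self x)
  have : π x ∈ s.image ρ := by
    rw [← h s hs3]
    exact mem_image_of_mem _ hx
  obtain ⟨y, hy, hyx⟩ := mem_image.mp this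
  have : y = ρ.symm (π x) := by rw [← hyx]; simp
  rw [this] at hy
  have := hs2 hy
  rw [mem_compl, mem_singleton] at this
  exact this rfl

end Lift

section Johnson

variable {n m : ℕ}

lemma johnson_local {α : Type*} [DecidableEq α] {m : ℕ} (hm : 1 ≤ m) {X Y D : Finset α}
    (hX : X.card = m + 1) (hY : Y.card = m + 1) (hD : D.card = m + 1)
    (hXY : (X ∩ Y).card = m) (hDX : (D ∩ X).card = m) (hDY : (D ∩ Y).card = m)
    (hns : ¬ X ∩ Y ⊆ D) : ∃ x ∈ X ∩ Y, D = (X ∪ Y) \ {x} := by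
  obtain ⟨x, hxXY, hxD⟩ := not_subset.mp hns
  have hxX : x ∈ X := (mem_inter.mp hxXY).1
  have hxY : x ∈ Y := (mem_inter.mp hxXY).2
  refine ⟨x, hxXY, ?_⟩
  have hXD : (X \ D).card = 1 := by
    rw [show X \ D = X \ (X ∩ D) from (sdiff_inter_self_left X D).symm,
      card_sdiff_of_subset inter_subset_left, inter_comm, hDX, hX]
    omega
  have hXDx : X \ D = {x} := by
    obtain ⟨y, hy⟩ := card_eq_one.mp hXD
    have hmem : x ∈ X \ D := mem_sdiff.mpr ⟨hxX, hxD⟩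
    rw [hy] at hmem ⊢
    rw [mem_singleton] at hmem
    rw [hmem]
  have hYD : (Y \ D).card = 1 := by
    rw [show Y \ D = Y \ (Y ∩ D) from (sdiff_inter_self_left Y D).symm,
      card_sdiff_of_subset inter_subset_left, inter_comm, hDY, hY]
    omega
  have hYDx : Y \ D = {x} := by
    obtain ⟨y, hy⟩ := card_eq_one.mp hYD
    have hmem : x ∈ Y \ D := mem_sdiff.mpr ⟨hxY, hxD⟩
    rw [hy] at hmem ⊢
    rw [mem_singleton] at hmem
    rw [hmem]
  have hsub : (X ∪ Y) \ {x} ⊆ D := by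
    intro z hz
    obtain ⟨hzU, hzx⟩ := mem_sdiff.mp hz
    rw [mem_singleton] at hzx
    by_contra hzD
    rcases mem_union.mp hzU with hzX | hzY
    · have : z ∈ X \ D := mem_sdiff.mpr ⟨hzX, hzD⟩
      rw [hXDx, mem_singleton] at this
      exact hzx this
    · have : z ∈ Y \ D := mem_sdiff.mpr ⟨hzY, hzD⟩
      rw [hYDx, mem_singleton] at this
      exact hzx this
  have hu : (X ∪ Y).card = m + 2 := by
    have h := card_union_add_card_inter X Y
    rw [hX, hY, hXY] at h
    omega
  have hcard : ((X ∪ Y) \ {x}).card = m + 1 := by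
    rw [card_sdiff_of_subset (singleton_subset_iff.mpr (mem_union_left _ hxX)), card_singleton, hu]
    omega
  exact (eq_of_subset_of_card_le hsub (by rw [hD, hcard])).symm

lemma exists_pair (hmn : m + 2 ≤ n) {T : Finset (Fin n)} (hT : T.card = m) :
    ∃ A B : Vtx n (m+1), T ⊆ A.1 ∧ T ⊆ B.1 ∧ A ≠ B ∧ A.1 ∩ B.1 = T := by
  have hTc : (Tᶜ : Finset (Fin n)).card = n - m := by
    rw [card_compl, Fintype.card_fin, hT]
  have h2 : 1 < (Tᶜ : Finset (Fin n)).card := by omega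
  obtain ⟨a, ha, b, hb, hab⟩ := one_lt_card.mp h2
  have haT : a ∉ T := mem_compl.mp ha
  have hbT : b ∉ T := mem_compl.mp hb
  refine ⟨⟨insert a T, by rw [card_insert_of_notMem haT, hT]⟩,
    ⟨insert b T, by rw [card_insert_of_notMem hbT, hT]⟩,
    subset_insert _ _, subset_insert _ _, ?_, ?_⟩
  · intro h
    have h' : (insert a T : Finset (Fin n)) = insert b T := congrArg Subtype.val h
    have hmem : a ∈ insert b T := h' ▸ mem_insert_self a T
    rcases mem_insert.mp hmem with h'' | h''
    exacts [hab h'', haT h'']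
  · ext x
    simp only [mem_inter, mem_insert]
    constructor
    · rintro ⟨rfl | h1, h2 | h2⟩
      · exact absurd h2 hab
      · exact h2
      · exact absurd h1 (by rw [h2] at h1 ⊢; exact hbT)
      · exact h1
    · intro hx
      exact ⟨Or.inr hx, Or.inr hx⟩

lemma star_inter (hm : 1 ≤ m) {v w : Vtx n (m+1)} {T : Finset (Fin n)} (hT : T.card = m)
    (hv : T ⊆ v.1) (hw : T ⊆ w.1) (hvw : v ≠ w) : (v.1 ∩ w.1).card = m := by
  have hsub : T ⊆ v.1 ∩ w.1 := subset_inter hv hw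
  have h1 : m ≤ (v.1 ∩ w.1).card := by
    have := card_le_card hsub; rwa [hT] at this
  have h2 : (v.1 ∩ w.1).card ≤ m + 1 := by
    have := card_le_card (inter_subset_left : v.1 ∩ w.1 ⊆ v.1); rwa [v.2] at this
  by_contra hne
  have h3 : (v.1 ∩ w.1).card = m + 1 := by omega
  have h4 : v.1 ∩ w.1 = v.1 := eq_of_subset_of_card_le inter_subset_left (by rw [v.2, h3])
  have h5 : v.1 ⊆ w.1 := by rw [← h4]; exact inter_subset_right
  exact hvw (Subtype.ext (eq_of_subset_of_card_le h5 (by rw [v.2, w.2])))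

lemma half (hm : 1 ≤ m) (hn : 2 * (m + 1) < n)
    (F : Equiv.Perm (Vtx n (m+1)))
    (hF : ∀ v w : Vtx n (m+1),
      (v ≠ w ∧ (v.1 ∩ w.1).card = m) ↔ (F v ≠ F w ∧ ((F v).1 ∩ (F w).1).card = m))
    (T : Finset (Fin n)) (hT : T.card = m) :
    ∃ T' : Finset (Fin n), T'.card = m ∧ ∀ v : Vtx n (m+1), T ⊆ v.1 → T' ⊆ (F v).1 := by
  classical
  obtain ⟨A, B, hTA, hTB, hABne, hABcap⟩ := exists_pair (by omega) hT
  have hRstar : ∀ v w : Vtx n (m+1), T ⊆ v.1 → T ⊆ w.1 → v ≠ w →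
      (F v ≠ F w ∧ ((F v).1 ∩ (F w).1).card = m) := by
    intro v w hv hw hvw
    exact (hF v w).mp ⟨hvw, star_inter hm hT hv hw hvw⟩
  have hT'card : ((F A).1 ∩ (F B).1).card = m := (hRstar A B hTA hTB hABne).2
  refine ⟨(F A).1 ∩ (F B).1, hT'card, ?_⟩
  by_contra hcon
  push_neg at hcon
  obtain ⟨v₀, hv₀T, hv₀⟩ := hcon
  have hv₀A : v₀ ≠ A := by rintro rfl; exact hv₀ inter_subset_left
  have hv₀B : v₀ ≠ B := by rintro rfl; exact hv₀ inter_subset_right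
  have hD₀X : ((F v₀).1 ∩ (F A).1).card = m := (hRstar v₀ A hv₀T hTA hv₀A).2
  have hD₀Y : ((F v₀).1 ∩ (F B).1).card = m := (hRstar v₀ B hv₀T hTB hv₀B).2
  obtain ⟨x, hxT', hD₀eq⟩ := johnson_local hm (F A).2 (F B).2 (F v₀).2 hT'card hD₀X hD₀Y hv₀
  have hall : ∀ v : Vtx n (m+1), T ⊆ v.1 → (F v).1 ⊆ (F A).1 ∪ (F B).1 := by
    intro v hv
    by_cases hvT' : (F A).1 ∩ (F B).1 ⊆ (F v).1
    · have hvv₀ : v ≠ v₀ := by rintro rfl; exact hv₀ hvT'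
      have hED : ((F v).1 ∩ (F v₀).1).card = m := (hRstar v v₀ hv hv₀T hvv₀).2
      have hdiff : ((F v).1 \ ((F A).1 ∩ (F B).1)).card = 1 := by
        rw [card_sdiff_of_subset hvT', (F v).2, hT'card]
        omega
      obtain ⟨e, he⟩ := card_eq_one.mp hdiff
      have heE : e ∈ (F v).1 ∧ e ∉ (F A).1 ∩ (F B).1 := by
        have : e ∈ (F v).1 \ ((F A).1 ∩ (F B).1) := he ▸ mem_singleton_self e
        exact mem_sdiff.mp this
      have hEeq : (F v).1 = insert e ((F A).1 ∩ (F B).1) := by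
        refine (eq_of_subset_of_card_le (insert_subset heE.1 hvT') ?_).symm
        rw [(F v).2, card_insert_of_notMem heE.2, hT'card]
      have hxD₀ : x ∉ (F v₀).1 := by rw [hD₀eq]; simp
      have hTD : ((F A).1 ∩ (F B).1) \ {x} ⊆ (F v₀).1 := by
        intro z hz
        obtain ⟨hzT', hzx⟩ := mem_sdiff.mp hz
        rw [mem_singleton] at hzx
        rw [hD₀eq]
        exact mem_sdiff.mpr ⟨mem_union_left _ (inter_subset_left hzT'),
          by rw [mem_singleton]; exact hzx⟩
      have hex : e ∈ (F v₀).1 := by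
        by_contra hexn
        have hinter : (F v).1 ∩ (F v₀).1 = ((F A).1 ∩ (F B).1) \ {x} := by
          ext z
          constructor
          · intro hz
            obtain ⟨hzE, hzD⟩ := mem_inter.mp hz
            rw [hEeq] at hzE
            rcases mem_insert.mp hzE with rfl | hzT'
            · exact absurd hzD hexn
            · refine mem_sdiff.mpr ⟨hzT', ?_⟩
              rw [mem_singleton]
              intro h
              rw [h] at hzD
              exact hxD₀ hzD
          · intro hz
            refine mem_inter.mpr ⟨?_, hTD hz⟩
            rw [hEeq]
            exact mem_insert_of_mem (mem_sdiff.mp hz).1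
        rw [hinter, card_sdiff_of_subset (singleton_subset_iff.mpr hxT'), card_singleton, hT'card] at hED
        omega
      rw [hEeq]
      refine insert_subset ?_ (inter_subset_left.trans subset_union_left)
      have : e ∈ ((F A).1 ∪ (F B).1) \ {x} := hD₀eq ▸ hex
      exact (mem_sdiff.mp this).1
    · have hvA : v ≠ A := by rintro rfl; exact hvT' inter_subset_left
      have hvB : v ≠ B := by rintro rfl; exact hvT' inter_subset_right
      have hvX : ((F v).1 ∩ (F A).1).card = m := (hRstar v A hv hTA hvA).2
      have hvY : ((F v).1 ∩ (F B).1).card = m := (hRstar v B hv hTB hvB).2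
      obtain ⟨x', _, heq⟩ := johnson_local hm (F A).2 (F B).2 (F v).2 hT'card hvX hvY hvT'
      rw [heq]
      exact sdiff_subset
  -- injection from Tᶜ into k-subsets of the (m+2)-set (F A).1 ∪ (F B).1
  have hUcard : ((F A).1 ∪ (F B).1).card = m + 2 := by
    have h := card_union_add_card_inter (F A).1 (F B).1
    rw [(F A).2, (F B).2, hT'card] at h
    omega
  have hg : ∀ y, y ∉ T → (insert y T).card = m + 1 := by
    intro y hy
    rw [card_insert_of_notMem hy, hT]
  set g : Fin n → Finset (Fin n) :=
    fun y => if hy : y ∈ T then ∅ else (F ⟨insert y T, hg y hy⟩).1 with hgdef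
  have hmaps : ∀ y ∈ Tᶜ, g y ∈ ((F A).1 ∪ (F B).1).powersetCard (m+1) := by
    intro y hy
    have hyT := mem_compl.mp hy
    rw [hgdef]
    simp only [dif_neg hyT]
    exact mem_powersetCard.mpr ⟨hall _ (subset_insert y T), (F _).2⟩
  have hinjOn : Set.InjOn g ↑(Tᶜ : Finset (Fin n)) := by
    intro y₁ h₁ y₂ h₂ hgy
    have hy₁ : y₁ ∉ T := mem_compl.mp (mem_coe.mp h₁)
    have hy₂ : y₂ ∉ T := mem_compl.mp (mem_coe.mp h₂)
    rw [hgdef] at hgy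
    simp only [dif_neg hy₁, dif_neg hy₂] at hgy
    have := F.injective (Subtype.ext hgy)
    have h' : (insert y₁ T : Finset (Fin n)) = insert y₂ T := congrArg Subtype.val this
    have hmem : y₁ ∈ insert y₂ T := h' ▸ mem_insert_self y₁ T
    rcases mem_insert.mp hmem with h'' | h''
    · exact h''
    · exact absurd h'' hy₁
  have hle := card_le_card_of_injOn g hmaps hinjOn
  rw [card_powersetCard, hUcard] at hle
  have hch : (m + 2).choose (m + 1) = m + 2 := Nat.choose_succ_self_right (m + 1)
  rw [hch, card_compl, Fintype.card_fin, hT] at hle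
  omega

lemma hF_symm (F : Equiv.Perm (Vtx n (m+1)))
    (hF : ∀ v w : Vtx n (m+1),
      (v ≠ w ∧ (v.1 ∩ w.1).card = m) ↔ (F v ≠ F w ∧ ((F v).1 ∩ (F w).1).card = m)) :
    ∀ v w : Vtx n (m+1),
      (v ≠ w ∧ (v.1 ∩ w.1).card = m) ↔
        (F.symm v ≠ F.symm w ∧ ((F.symm v).1 ∩ (F.symm w).1).card = m) := by
  intro v w
  have := hF (F.symm v) (F.symm w)
  simp only [Equiv.apply_symm_apply] at this
  exact this.symm

lemma bridge (hm : 1 ≤ m) (hn : 2 * (m + 1) < n)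
    (F : Equiv.Perm (Vtx n (m+1)))
    (hF : ∀ v w : Vtx n (m+1),
      (v ≠ w ∧ (v.1 ∩ w.1).card = m) ↔ (F v ≠ F w ∧ ((F v).1 ∩ (F w).1).card = m))
    (T : Finset (Fin n)) (hT : T.card = m) :
    ∃ T' : Finset (Fin n), T'.card = m ∧ ∀ v : Vtx n (m+1), (T ⊆ v.1 ↔ T' ⊆ (F v).1) := by
  obtain ⟨T', hT'c, hT'⟩ := half hm hn F hF T hT
  obtain ⟨T'', hT''c, hT''⟩ := half hm hn F.symm (hF_symm F hF) T' hT'c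
  obtain ⟨A, B, hTA, hTB, hABne, hABcap⟩ := exists_pair (by omega) hT
  have hTT : T'' = T := by
    have hA : T'' ⊆ A.1 := by
      have h1 := hT'' (F A) (hT' A hTA)
      rwa [Equiv.symm_apply_apply] at h1
    have hB : T'' ⊆ B.1 := by
      have h1 := hT'' (F B) (hT' B hTB)
      rwa [Equiv.symm_apply_apply] at h1
    have hsub : T'' ⊆ T := by rw [← hABcap]; exact subset_inter hA hB
    exact eq_of_subset_of_card_le hsub (by rw [hT, hT''c])
  refine ⟨T', hT'c, fun v => ⟨hT' v, fun h => ?_⟩⟩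
  have h1 := hT'' (F v) h
  rwa [Equiv.symm_apply_apply, hTT] at h1

lemma ext_by_supersets (hmn : m + 2 ≤ n) {S₁ S₂ : Finset (Fin n)}
    (h₁ : S₁.card = m) (h₂ : S₂.card = m)
    (h : ∀ v : Vtx n (m+1), S₁ ⊆ v.1 ↔ S₂ ⊆ v.1) : S₁ = S₂ := by
  by_contra hne
  have hy : ∃ y, y ∈ S₂ ∧ y ∉ S₁ := by
    by_contra h'
    push_neg at h'
    have hsub : S₂ ⊆ S₁ := fun y hyS => h' y hyS
    exact hne (eq_of_subset_of_card_le hsub (by rw [h₁, h₂])).symm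
  obtain ⟨y, hyS₂, hyS₁⟩ := hy
  obtain ⟨u, hu₁, hu₂, hu₃⟩ := exists_subsuperset_card_eq (n := m + 1)
    (subset_compl_singleton.mpr hyS₁)
    (by rw [h₁]; omega)
    (by rw [card_compl, card_singleton, Fintype.card_fin]; omega)
  have := (h ⟨u, hu₃⟩).mp hu₁
  have hyu : y ∈ u := this hyS₂
  have := hu₂ hyu
  rw [mem_compl, mem_singleton] at this
  exact this rfl

lemma johnson_via_superset (hm : 1 ≤ m) {S₁ S₂ : Vtx n m} :
    (S₁ ≠ S₂ ∧ (S₁.1 ∩ S₂.1).card = m - 1) ↔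
      (S₁ ≠ S₂ ∧ ∃ v : Vtx n (m+1), S₁.1 ⊆ v.1 ∧ S₂.1 ⊆ v.1) := by
  constructor
  · rintro ⟨hne, hc⟩
    refine ⟨hne, ⟨⟨S₁.1 ∪ S₂.1, ?_⟩, subset_union_left, subset_union_right⟩⟩
    have h := card_union_add_card_inter S₁.1 S₂.1
    rw [hc, S₁.2, S₂.2] at h
    omega
  · rintro ⟨hne, v, h1, h2⟩
    refine ⟨hne, ?_⟩
    have hU : S₁.1 ∪ S₂.1 ⊆ v.1 := union_subset h1 h2
    have h3 : (S₁.1 ∪ S₂.1).card ≤ m + 1 := by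
      have := card_le_card hU; rwa [v.2] at this
    have h5 : (S₁.1 ∩ S₂.1).card ≤ m := by
      have := card_le_card (inter_subset_left : S₁.1 ∩ S₂.1 ⊆ S₁.1); rwa [S₁.2] at this
    have h4 : (S₁.1 ∩ S₂.1).card ≤ m - 1 := by
      by_contra h6
      push_neg at h6
      have hc' : (S₁.1 ∩ S₂.1).card = m := by omega
      have hinter : S₁.1 ∩ S₂.1 = S₁.1 :=
        eq_of_subset_of_card_le inter_subset_left (by rw [S₁.2, hc'])
      have hsub : S₁.1 ⊆ S₂.1 := by rw [← hinter]; exact inter_subset_right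
      exact hne (Subtype.ext (eq_of_subset_of_card_le hsub (by rw [S₁.2, S₂.2])))
    have h7 := card_union_add_card_inter S₁.1 S₂.1
    rw [S₁.2, S₂.2] at h7
    omega

lemma johnson_rigidity : ∀ k : ℕ, 1 ≤ k → 2 * k < n →
    ∀ F : Equiv.Perm (Vtx n k),
    (∀ v w : Vtx n k,
      (v ≠ w ∧ (v.1 ∩ w.1).card = k - 1) ↔ (F v ≠ F w ∧ ((F v).1 ∩ (F w).1).card = k - 1)) →
    ∃ π : Equiv.Perm (Fin n), ∀ v : Vtx n k, (F v).1 = v.1.image π := by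
  intro k
  induction k with
  | zero => intro h; omega
  | succ m ih =>
    intro _ hn F hF
    rcases Nat.eq_zero_or_pos m with rfl | hm
    · -- base case k = 1
      classical
      have hsing : ∀ v : Vtx n 1, ∃ x, v.1 = {x} := fun v => card_eq_one.mp v.2
      choose el hel using hsing
      have hback : ∀ w : Vtx n 1, (⟨{el w}, card_singleton _⟩ : Vtx n 1) = w :=
        fun w => Subtype.ext (hel w).symm
      have hel_singleton : ∀ x : Fin n, el ⟨{x}, card_singleton x⟩ = x := by
        intro x
        have := hel ⟨{x}, card_singleton x⟩
        exact (singleton_inj.mp this.symm)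
      refine ⟨⟨fun x => el (F ⟨{x}, card_singleton x⟩),
        fun x => el (F.symm ⟨{x}, card_singleton x⟩), ?_, ?_⟩, ?_⟩
      · intro x
        simp only []
        rw [hback (F ⟨{x}, card_singleton x⟩), Equiv.symm_apply_apply, hel_singleton]
      · intro x
        simp only []
        rw [hback (F.symm ⟨{x}, card_singleton x⟩), Equiv.apply_symm_apply, hel_singleton]
      · intro v
        rw [hel (F v)]
        conv_rhs => rw [show v.1 = {el v} from hel v]
        rw [image_singleton]
        congr 1
        show el (F v) = el (F ⟨{el v}, card_singleton _⟩)
        rw [hback v]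
    · -- inductive step, k = m + 1 with m ≥ 1
      classical
      simp only [Nat.add_sub_cancel] at hF
      choose g hg1 hg2 using fun T : Vtx n m => bridge hm hn F hF T.1 T.2
      choose g' hg'1 hg'2 using
        fun S : Vtx n m => bridge hm hn F.symm (hF_symm F hF) S.1 S.2
      set F' : Vtx n m → Vtx n m := fun T => ⟨g T, hg1 T⟩ with hF'def
      set G' : Vtx n m → Vtx n m := fun S => ⟨g' S, hg'1 S⟩ with hG'def
      have hFG : ∀ T, G' (F' T) = T := by
        intro T
        refine Subtype.ext (ext_by_supersets (by omega) (hg'1 _) T.2 fun v => ?_)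
        have e1 := hg'2 (F' T) (F v)
        rw [Equiv.symm_apply_apply] at e1
        have e2 := hg2 T v
        exact (e1.symm.trans e2.symm)
      have hGF : ∀ S, F' (G' S) = S := by
        intro S
        refine Subtype.ext (ext_by_supersets (by omega) (hg1 _) S.2 fun w => ?_)
        have e1 := hg2 (G' S) (F.symm w)
        rw [Equiv.apply_symm_apply] at e1
        have e2 := hg'2 S w
        exact (e1.symm.trans e2.symm)
      set F'E : Equiv.Perm (Vtx n m) := ⟨F', G', hFG, hGF⟩ with hF'E
      have hF'spec : ∀ (T : Vtx n m) (v : Vtx n (m+1)), T.1 ⊆ v.1 ↔ (F'E T).1 ⊆ (F v).1 :=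
        fun T v => hg2 T v
      have hF'inj : Function.Injective F'E := F'E.injective
      have hF'hyp : ∀ T₁ T₂ : Vtx n m,
          (T₁ ≠ T₂ ∧ (T₁.1 ∩ T₂.1).card = m - 1) ↔
            (F'E T₁ ≠ F'E T₂ ∧ ((F'E T₁).1 ∩ (F'E T₂).1).card = m - 1) := by
        intro T₁ T₂
        rw [johnson_via_superset hm, johnson_via_superset hm]
        constructor
        · rintro ⟨hne, v, h1, h2⟩
          exact ⟨fun h => hne (hF'inj h), F v,
            (hF'spec T₁ v).mp h1, (hF'spec T₂ v).mp h2⟩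
        · rintro ⟨hne', w, h1, h2⟩
          refine ⟨fun h => hne' (congrArg F'E h), F.symm w, ?_, ?_⟩
          · rw [hF'spec T₁ (F.symm w), Equiv.apply_symm_apply]; exact h1
          · rw [hF'spec T₂ (F.symm w), Equiv.apply_symm_apply]; exact h2
      obtain ⟨π, hπ⟩ := ih hm (by omega) F'E hF'hyp
      refine ⟨π, fun v => ?_⟩
      have hsub : v.1.image π ⊆ (F v).1 := by
        intro z hz
        obtain ⟨x, hxv, rfl⟩ := mem_image.mp hz
        obtain ⟨T, hT1, hT2, hT3⟩ := exists_subsuperset_card_eq (n := m)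
          (singleton_subset_iff.mpr hxv) (by rw [card_singleton]; omega)
          (by rw [v.2]; omega)
        have hspec := (hF'spec ⟨T, hT3⟩ v).mp hT2
        have himg := hπ ⟨T, hT3⟩
        refine hspec ?_
        rw [himg]
        exact mem_image_of_mem π (hT1 (mem_singleton_self x))
      exact (eq_of_subset_of_card_le hsub
        (by rw [(F v).2, card_image_of_injective _ π.injective, v.2])).symm

end Johnson

section Counting

variable {n k i : ℕ}

lemma ite_one_zero_congr {p q : Prop} [Decidable p] [Decidable q] (h : p ↔ q) :
    (if p then 1 else 0 : ℕ) = if q then 1 else 0 := by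
  split_ifs with h1 h2 <;> tauto

lemma card_filter_disjoint (A : Finset (Fin n)) :
    ((univ : Finset (Vtx n k)).filter fun v => Disjoint v.1 A).card = (n - A.card).choose k := by
  classical
  have h : ((univ : Finset (Vtx n k)).filter fun v => Disjoint v.1 A).card
      = (Aᶜ.powersetCard k).card := by
    refine card_bij' (fun v _ => v.1) (fun s hs => ⟨s, (mem_powersetCard.mp hs).2⟩)
      ?_ ?_ ?_ ?_
    · intro v hv
      rw [mem_filter] at hv
      exact mem_powersetCard.mpr ⟨disj_compl.mp hv.2, v.2⟩
    · intro s hs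
      rw [mem_filter]
      exact ⟨mem_univ _, disj_compl.mpr (mem_powersetCard.mp hs).1⟩
    · intro v hv; rfl
    · intro s hs; rfl
  rw [h, card_powersetCard, card_compl, Fintype.card_fin]

lemma card_filter_equiv {α : Type*} [Fintype α] [DecidableEq α] (e : Equiv.Perm α)
    (P Q : α → Prop) [DecidablePred P] [DecidablePred Q]
    (h : ∀ a, Q (e a) ↔ P a) :
    ((univ : Finset α).filter Q).card = ((univ : Finset α).filter P).card := by
  refine card_equiv e.symm fun u => ?_
  rw [mem_filter, mem_filter]
  constructor
  · intro hu
    refine ⟨mem_univ _, ?_⟩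
    rw [← h (e.symm u)]
    rw [Equiv.apply_symm_apply]
    exact hu.2
  · intro hu
    refine ⟨mem_univ _, ?_⟩
    have := (h (e.symm u)).mpr hu.2
    rwa [Equiv.apply_symm_apply] at this

lemma adj_filter_eq (v : Vtx n k) :
    ((univ : Finset (Vtx n k)).filter fun u => (GGraph n k i).Adj v u)
      = ((univ : Finset (Vtx n k)).filter
          fun u => Disjoint u.1 (v.1.image (sigmaPerm n i))).erase v := by
  ext u
  simp only [mem_filter, mem_univ, true_and, mem_erase]
  exact adj_iff

lemma deg_eq (v : Vtx n k) :
    ((univ : Finset (Vtx n k)).filter fun u => (GGraph n k i).Adj v u).card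
      = if Disjoint v.1 (v.1.image (sigmaPerm n i)) then (n - k).choose k - 1
        else (n - k).choose k := by
  rw [adj_filter_eq, card_erase_eq_ite]
  have hc : ((univ : Finset (Vtx n k)).filter
      fun u => Disjoint u.1 (v.1.image (sigmaPerm n i))).card = (n - k).choose k := by
    rw [card_filter_disjoint, card_image_of_injective _ (Equiv.injective _), v.2]
  by_cases h : Disjoint v.1 (v.1.image (sigmaPerm n i))
  · rw [if_pos (by simp [mem_filter, h]), if_pos h, hc]
  · rw [if_neg (by simp [mem_filter, h]), if_neg h, hc]

lemma good_aut (hn : 2 * k < n) {f : Equiv.Perm (Vtx n k)}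
    (hf : f ∈ graphAut (GGraph n k i)) (v : Vtx n k) :
    Disjoint (f v).1 ((f v).1.image (sigmaPerm n i)) ↔
      Disjoint v.1 (v.1.image (sigmaPerm n i)) := by
  have h1 := card_filter_equiv f (fun u => (GGraph n k i).Adj v u)
    (fun u => (GGraph n k i).Adj (f v) u) (fun u => hf v u)
  rw [deg_eq, deg_eq] at h1
  have hpos : 0 < (n - k).choose k := Nat.choose_pos (by omega)
  constructor
  · intro h
    by_contra h'
    rw [if_pos h, if_neg h'] at h1
    omega
  · intro h
    by_contra h'
    rw [if_neg h', if_pos h] at h1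
    omega

lemma tval_eq (hn : 2 * k < n) (hk : 1 ≤ k) {v w : Vtx n k} (hvw : v ≠ w) :
    ((univ : Finset (Vtx n k)).filter
        fun u => (GGraph n k i).Adj v u ∧ (GGraph n k i).Adj w u).card
      + ((if Disjoint v.1 (v.1.image (sigmaPerm n i)) ∧ (GGraph n k i).Adj v w
            then 1 else 0)
        + (if Disjoint w.1 (w.1.image (sigmaPerm n i)) ∧ (GGraph n k i).Adj v w
            then 1 else 0))
      = (n - (2 * k - (v.1 ∩ w.1).card)).choose k := by
  classical
  set UU := v.1.image (sigmaPerm n i) ∪ w.1.image (sigmaPerm n i) with hUU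
  have hcom : ((univ : Finset (Vtx n k)).filter
      fun u => (GGraph n k i).Adj v u ∧ (GGraph n k i).Adj w u)
      = ((univ : Finset (Vtx n k)).filter fun u => Disjoint u.1 UU) \ {v, w} := by
    ext u
    simp only [mem_filter, mem_univ, true_and, mem_sdiff, mem_insert, mem_singleton, hUU,
      disjoint_union_right]
    rw [adj_iff (u := u) (v := v), adj_iff (u := u) (v := w)]
    tauto
  have hXcard : ((univ : Finset (Vtx n k)).filter fun u => Disjoint u.1 UU).card
      = (n - (2 * k - (v.1 ∩ w.1).card)).choose k := by
    rw [card_filter_disjoint]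
    congr 1
    have h1 : UU = (v.1 ∪ w.1).image (sigmaPerm n i) := by
      rw [hUU, image_union]
    rw [h1, card_image_of_injective _ (Equiv.injective _)]
    have h2 := card_union_add_card_inter v.1 w.1
    rw [v.2, w.2] at h2
    omega
  have hvmem : Disjoint v.1 UU ↔
      (Disjoint v.1 (v.1.image (sigmaPerm n i)) ∧ (GGraph n k i).Adj v w) := by
    rw [hUU, disjoint_union_right, adj_def]
    constructor
    · rintro ⟨h1, h2⟩; exact ⟨h1, hvw, h2⟩
    · rintro ⟨h1, _, h2⟩; exact ⟨h1, h2⟩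
  have hwmem : Disjoint w.1 UU ↔
      (Disjoint w.1 (w.1.image (sigmaPerm n i)) ∧ (GGraph n k i).Adj v w) := by
    rw [hUU, disjoint_union_right, adj_def]
    constructor
    · rintro ⟨h1, h2⟩; exact ⟨h2, hvw, disj_swap.mp h1⟩
    · rintro ⟨h1, _, h2⟩; exact ⟨disj_swap.mp h2, h1⟩
  have hinter : (((univ : Finset (Vtx n k)).filter fun u => Disjoint u.1 UU) ∩ {v, w}).card
      = (if Disjoint v.1 UU then 1 else 0) + (if Disjoint w.1 UU then 1 else 0) := by
    have h1 : ((univ : Finset (Vtx n k)).filter fun u => Disjoint u.1 UU) ∩ {v, w}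
        = ({v, w} : Finset (Vtx n k)).filter fun u => Disjoint u.1 UU := by
      ext u
      simp only [mem_inter, mem_filter, mem_univ, true_and]
      tauto
    rw [h1, show ({v, w} : Finset (Vtx n k)) = insert v {w} from rfl,
      filter_insert, filter_singleton]
    by_cases h2 : Disjoint v.1 UU <;> by_cases h3 : Disjoint w.1 UU <;>
      simp [h2, h3, hvw]
  have hsplit : ((((univ : Finset (Vtx n k)).filter fun u => Disjoint u.1 UU) \ {v, w}).card
      + (((univ : Finset (Vtx n k)).filter fun u => Disjoint u.1 UU) ∩ {v, w}).card)
      = ((univ : Finset (Vtx n k)).filter fun u => Disjoint u.1 UU).card := by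
    rw [← card_union_of_disjoint (disjoint_sdiff_inter _ _), sdiff_union_inter]
  rw [hcom, ite_one_zero_congr hvmem.symm, ite_one_zero_congr hwmem.symm, ← hinter,
    ← hXcard]
  exact hsplit

lemma inter_card_le (hk : 1 ≤ k) {v w : Vtx n k} (hvw : v ≠ w) :
    (v.1 ∩ w.1).card ≤ k - 1 := by
  have h1 : (v.1 ∩ w.1).card ≤ k := by
    have := card_le_card (inter_subset_left : v.1 ∩ w.1 ⊆ v.1); rwa [v.2] at this
  by_contra h2
  push_neg at h2
  have h3 : (v.1 ∩ w.1).card = k := by omega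
  have h4 : v.1 ∩ w.1 = v.1 := eq_of_subset_of_card_le inter_subset_left (by rw [v.2, h3])
  have h5 : v.1 ⊆ w.1 := by rw [← h4]; exact inter_subset_right
  exact hvw (Subtype.ext (eq_of_subset_of_card_le h5 (by rw [v.2, w.2])))

lemma choose_lt_top (hn : 2 * k < n) (hk : 1 ≤ k) {t : ℕ} (ht : t < k - 1) :
    (n - (2 * k - t)).choose k < (n - (2 * k - (k - 1))).choose k := by
  obtain ⟨k0, rfl⟩ : ∃ k0, k = k0 + 1 := ⟨k - 1, by omega⟩
  have h1 : n - (2 * (k0 + 1) - t) ≤ n - (k0 + 3) := by omega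
  have h2 : n - (2 * (k0 + 1) - (k0 + 1 - 1)) = (n - (k0 + 3)) + 1 := by omega
  calc (n - (2 * (k0 + 1) - t)).choose (k0 + 1)
      ≤ (n - (k0 + 3)).choose (k0 + 1) := Nat.choose_le_choose _ h1
    _ < ((n - (k0 + 3)) + 1).choose (k0 + 1) := by
        rw [Nat.choose_succ_succ']
        have := Nat.choose_pos (show k0 ≤ n - (k0 + 3) by omega)
        omega
    _ = (n - (2 * (k0 + 1) - (k0 + 1 - 1))).choose (k0 + 1) := by rw [h2]

lemma johnson_aut (hn : 2 * k < n) (hk : 1 ≤ k) {f : Equiv.Perm (Vtx n k)}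
    (hf : f ∈ graphAut (GGraph n k i)) {v w : Vtx n k} (hvw : v ≠ w) :
    (((f v).1 ∩ (f w).1).card = k - 1) ↔ ((v.1 ∩ w.1).card = k - 1) := by
  have hfvw : f v ≠ f w := fun h => hvw (f.injective h)
  have h1 := tval_eq (i := i) hn hk hvw
  have h2 := tval_eq (i := i) hn hk hfvw
  have hcom := card_filter_equiv f
    (fun u => (GGraph n k i).Adj v u ∧ (GGraph n k i).Adj w u)
    (fun u => (GGraph n k i).Adj (f v) u ∧ (GGraph n k i).Adj (f w) u)
    (fun u => and_congr (hf v u) (hf w u))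
  have hgv := good_aut hn hf v
  have hgw := good_aut hn hf w
  have hadj := hf v w
  have heq : (n - (2 * k - ((f v).1 ∩ (f w).1).card)).choose k
      = (n - (2 * k - (v.1 ∩ w.1).card)).choose k := by
    rw [← h1, ← h2, hcom, ite_one_zero_congr (and_congr hgv hadj),
      ite_one_zero_congr (and_congr hgw hadj)]
  have hle1 := inter_card_le hk hvw
  have hle2 := inter_card_le hk hfvw
  constructor
  · intro h
    by_contra h'
    have ht' : (v.1 ∩ w.1).card < k - 1 := by omega
    have hlt := choose_lt_top hn hk ht'
    rw [h] at heq
    omega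
  · intro h
    by_contra h'
    have ht' : ((f v).1 ∩ (f w).1).card < k - 1 := by omega
    have hlt := choose_lt_top hn hk ht'
    rw [h] at heq
    omega

end Counting

section Commute

variable {n k i : ℕ}

lemma subset_of_disj_imp (hn : 2 * k < n) (hk2 : 2 ≤ k) {A B : Finset (Fin n)}
    (hA : A.card = k) (hB : B.card = k) (p : Vtx n k)
    (H : ∀ v : Vtx n k, v ≠ p → Disjoint v.1 B → Disjoint v.1 A) : A ⊆ B := by
  intro a ha
  by_contra haB
  have haC : a ∈ (Bᶜ : Finset (Fin n)) := mem_compl.mpr haB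
  have hCcard : (Bᶜ : Finset (Fin n)).card = n - k := by
    rw [card_compl, Fintype.card_fin, hB]
  have hScard : ((Bᶜ : Finset (Fin n)).erase a).card = n - k - 1 := by
    rw [card_erase_of_mem haC, hCcard]
  obtain ⟨s₁, hs₁S, hs₁c⟩ := exists_subset_card_eq
    (show k - 1 ≤ ((Bᶜ : Finset (Fin n)).erase a).card by omega)
  have hyex : (((Bᶜ : Finset (Fin n)).erase a) \ s₁).Nonempty := by
    rw [← card_pos, card_sdiff_of_subset hs₁S, hScard, hs₁c]
    omega
  obtain ⟨y, hy⟩ := hyex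
  have hyS : y ∈ (Bᶜ : Finset (Fin n)).erase a := (mem_sdiff.mp hy).1
  have hys₁ : y ∉ s₁ := (mem_sdiff.mp hy).2
  have hxex : s₁.Nonempty := by rw [← card_pos, hs₁c]; omega
  obtain ⟨x, hx⟩ := hxex
  have has₁ : a ∉ s₁ := fun h => (mem_erase.mp (hs₁S h)).1 rfl
  have hs₂sub : insert y (s₁.erase x) ⊆ (Bᶜ : Finset (Fin n)).erase a :=
    insert_subset hyS ((erase_subset x s₁).trans hs₁S)
  have hs₂c : (insert y (s₁.erase x)).card = k - 1 := by
    rw [card_insert_of_notMem (fun h => hys₁ (erase_subset x s₁ h)),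
      card_erase_of_mem hx, hs₁c]
    omega
  have has₂ : a ∉ insert y (s₁.erase x) := fun h => (mem_erase.mp (hs₂sub h)).1 rfl
  have hv₁c : (insert a s₁).card = k := by
    rw [card_insert_of_notMem has₁, hs₁c]; omega
  have hv₂c : (insert a (insert y (s₁.erase x))).card = k := by
    rw [card_insert_of_notMem has₂, hs₂c]; omega
  set v₁ : Vtx n k := ⟨insert a s₁, hv₁c⟩ with hv₁
  set v₂ : Vtx n k := ⟨insert a (insert y (s₁.erase x)), hv₂c⟩ with hv₂
  have hv12 : v₁ ≠ v₂ := by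
    intro h
    have h' : (insert a s₁ : Finset (Fin n)) = insert a (insert y (s₁.erase x)) :=
      congrArg Subtype.val h
    have hymem : y ∈ insert a s₁ := by
      rw [h']; exact mem_insert_of_mem (mem_insert_self _ _)
    rcases mem_insert.mp hymem with h'' | h''
    · exact (mem_erase.mp hyS).1 h''
    · exact hys₁ h''
  have hdisj : ∀ (v : Vtx n k), v.1 ⊆ insert a ((Bᶜ : Finset (Fin n)).erase a) →
      Disjoint v.1 B := by
    intro v hv
    refine disj_compl.mpr (hv.trans ?_)
    intro z hz
    rcases mem_insert.mp hz with rfl | hz'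
    · exact haC
    · exact (erase_subset _ _) hz'
  have hv₁sub : v₁.1 ⊆ insert a ((Bᶜ : Finset (Fin n)).erase a) :=
    insert_subset_insert a hs₁S
  have hv₂sub : v₂.1 ⊆ insert a ((Bᶜ : Finset (Fin n)).erase a) :=
    insert_subset_insert a hs₂sub
  have hcontra : ∀ (v : Vtx n k), v ≠ p → a ∈ v.1 →
      v.1 ⊆ insert a ((Bᶜ : Finset (Fin n)).erase a) → False := by
    intro v hvp hav hsub
    have hdA := H v hvp (hdisj v hsub)
    exact disjoint_left.mp hdA hav ha
  by_cases hp : v₁ = p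
  · refine hcontra v₂ ?_ (mem_insert_self _ _) hv₂sub
    rw [← hp]
    exact fun h => hv12 h.symm
  · exact hcontra v₁ hp (mem_insert_self _ _) hv₁sub

lemma eq_of_disj_iff (hn : 2 * k < n) (hk2 : 2 ≤ k) {A B : Finset (Fin n)}
    (hA : A.card = k) (hB : B.card = k) (p : Vtx n k)
    (H : ∀ v : Vtx n k, v ≠ p → (Disjoint v.1 A ↔ Disjoint v.1 B)) : A = B :=
  subset_antisymm
    (subset_of_disj_imp hn hk2 hA hB p (fun v hv => (H v hv).mpr))
    (subset_of_disj_imp hn hk2 hB hA p (fun v hv => (H v hv).mp))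

lemma aut_surj (hn : 2 * k < n) (hk : 1 ≤ k) (hik : i < k) {f : Equiv.Perm (Vtx n k)}
    (hf : f ∈ graphAut (GGraph n k i)) :
    ∃ π : Equiv.Perm (Fin n), (∀ v : Vtx n k, (f v).1 = v.1.image π)
      ∧ π * sigmaPerm n i = sigmaPerm n i * π := by
  have hF : ∀ v w : Vtx n k,
      (v ≠ w ∧ (v.1 ∩ w.1).card = k - 1) ↔
        (f v ≠ f w ∧ ((f v).1 ∩ (f w).1).card = k - 1) := by
    intro v w
    constructor
    · rintro ⟨hne, hc⟩
      exact ⟨fun h => hne (f.injective h), (johnson_aut hn hk hf hne).mpr hc⟩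
    · rintro ⟨hne, hc⟩
      have hne' : v ≠ w := fun h => hne (congrArg f h)
      exact ⟨hne', (johnson_aut hn hk hf hne').mp hc⟩
  obtain ⟨π, hπ⟩ := johnson_rigidity k hk hn f hF
  refine ⟨π, hπ, ?_⟩
  by_cases hi0 : i = 0
  · subst hi0
    rw [sigmaPerm_zero, mul_one, one_mul]
  · have hk2 : 2 ≤ k := by omega
    refine perm_eq_of_image_eq hk (by omega) (fun s hs => ?_)
    set w : Vtx n k := ⟨s, hs⟩ with hw
    have hAcard : ((w.1.image π).image (sigmaPerm n i)).card = k := by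
      rw [card_image_of_injective _ (Equiv.injective _),
        card_image_of_injective _ π.injective, w.2]
    have hBcard : ((w.1.image (sigmaPerm n i)).image π).card = k := by
      rw [card_image_of_injective _ π.injective,
        card_image_of_injective _ (Equiv.injective _), w.2]
    have hAB : (w.1.image π).image (sigmaPerm n i) = (w.1.image (sigmaPerm n i)).image π := by
      refine eq_of_disj_iff hn hk2 hAcard hBcard (liftPerm π w) (fun v hvp => ?_)
      set u := (liftPerm π).symm v with hu
      have huv : liftPerm π u = v := Equiv.apply_symm_apply _ v
      have huval : u.1.image π = v.1 := congrArg Subtype.val huv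
      have huw : u ≠ w := by
        intro h
        apply hvp
        rw [← huv, h]
      have hadj := hf u w
      rw [adj_def, adj_def] at hadj
      have hne2 : f u ≠ f w := fun h => huw (f.injective h)
      have hdisj : Disjoint (f u).1 ((f w).1.image (sigmaPerm n i)) ↔
          Disjoint u.1 (w.1.image (sigmaPerm n i)) := by
        constructor
        · intro hd; exact (hadj.mp ⟨hne2, hd⟩).2
        · intro hd; exact (hadj.mpr ⟨huw, hd⟩).2
      rw [hπ u, hπ w, huval] at hdisj
      have hstep : Disjoint u.1 (w.1.image (sigmaPerm n i)) ↔
          Disjoint v.1 ((w.1.image (sigmaPerm n i)).image π) := by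
        rw [← huval]
        exact (Finset.disjoint_image π.injective).symm
      exact hdisj.trans hstep
    show s.image (π * sigmaPerm n i) = s.image (sigmaPerm n i * π)
    rw [Equiv.Perm.coe_mul, Equiv.Perm.coe_mul, ← image_image, ← image_image]
    exact hAB.symm

lemma lift_mem_aut' {π : Equiv.Perm (Fin n)}
    (hπ : π * sigmaPerm n i = sigmaPerm n i * π) :
    liftPerm (k := k) π ∈ graphAut (GGraph n k i) := by
  rw [mem_graphAut_iff]
  intro a b
  rw [adj_def, adj_def]
  have hne : liftPerm (k := k) π a ≠ liftPerm π b ↔ a ≠ b :=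
    (Equiv.injective (liftPerm π)).ne_iff
  refine and_congr hne ?_
  have himg : ((b.1.image π).image (sigmaPerm n i)) = (b.1.image (sigmaPerm n i)).image π := by
    rw [image_image, image_image]
    have hco : ⇑(sigmaPerm n i) ∘ ⇑π = ⇑π ∘ ⇑(sigmaPerm n i) := by
      have h1 := congrArg (fun e : Equiv.Perm (Fin n) => ⇑e) hπ
      simpa [Equiv.Perm.coe_mul] using h1.symm
    rw [hco]
  rw [liftPerm_apply, liftPerm_apply, himg]
  exact Finset.disjoint_image π.injective

end Commute

/-- for `n > 2k`, `k ≥ 1`, `0 ≤ i < k`, the automorphism group of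
`G_i(n,k)` is isomorphic to the centralizer of `σ_i` in `S_n`. -/
theorem aut_GGraph_iso_centralizer (n k i : ℕ) (hn : 2 * k < n) (hk : 1 ≤ k)
    (hi : i < k) :
    Nonempty ((graphAut (GGraph n k i)) ≃*
      (Subgroup.centralizer ({sigmaPerm n i} : Set (Equiv.Perm (Fin n))))) := by
  classical
  let Φ : (Subgroup.centralizer ({sigmaPerm n i} : Set (Equiv.Perm (Fin n)))) →*
      (graphAut (GGraph n k i)) :=
    { toFun := fun π => ⟨liftPerm π.1,
        lift_mem_aut' (Subgroup.mem_centralizer_singleton_iff.mp π.2)⟩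
      map_one' := Subtype.ext liftPerm_one
      map_mul' := fun π ρ => Subtype.ext (liftPerm_mul π.1 ρ.1) }
  have hinj : Function.Injective Φ := by
    intro π ρ h
    have h' : liftPerm (n := n) (k := k) π.1 = liftPerm ρ.1 := congrArg Subtype.val h
    refine Subtype.ext (perm_eq_of_image_eq hk (by omega) fun s hs => ?_)
    have := congrArg (fun e : Equiv.Perm (Vtx n k) => (e ⟨s, hs⟩).1) h'
    simpa [liftPerm_apply] using this
  have hsurj : Function.Surjective Φ := by
    rintro ⟨f, hf⟩
    obtain ⟨π, hπ, hcomm⟩ := aut_surj hn hk hi hf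
    refine ⟨⟨π, Subgroup.mem_centralizer_singleton_iff.mpr hcomm⟩, ?_⟩
    apply Subtype.ext
    show liftPerm π = f
    refine Equiv.ext fun v => Subtype.ext ?_
    rw [liftPerm_apply]
    exact (hπ v).symm
  exact ⟨(MulEquiv.ofBijective Φ ⟨hinj, hsurj⟩).symm⟩
end
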